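/- arXiv:1501.02992 — 5 statements merged into one kernel-verified Lean document; each statement's English description precedes it below -/
import Mathlib

section
/- Let q > 1 be real and m ≥ 1. For 1 ≤ j ≤ m let f_j be a formal Laurent series over ℂ such that g_j := 1 + (q−1) f_j is nonzero; write v_j := v₀(g_j) and t_j := t₀(g_j). Assume v_1 ≤ v_2 ≤ ⋯ ≤ v_m and the non-resonance condition: for all j ≠ k, if v_j = v_k then t_j/t_k ∉ {q^n : n ∈ ℤ}. Let C be the m × m matrix over the field of formal Laurent series whose diagonal entries are g_1, …, g_m, whose entries on the superdiagonal all equal q − 1, and whose remaining entries are 0, and let D be the diagonal matrix Diag(t_1 z^{v_1}, …, t_m z^{v_m}). Then there exists a unique upper triangular m × m matrix Ĝ = (ĝ_{j,k}) of formal Laurent series, with every diagonal entry ĝ_{j,j} of order 0 and leading coefficient 1, such that (σ_q Ĝ) · D = C · Ĝ, where σ_q is applied entrywise. In particular Ĝ is invertible and C = (σ_q Ĝ) · D · Ĝ^{−1}. -/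
/-- The dilatation `σ_q` on formal Laurent series: `(σ_q G)_n = q^n G_n`,
i.e. `(σ_q G)(z) = G(qz)`. -/
noncomputable def sigmaQ (q : ℝ) (G : LaurentSeries ℂ) : LaurentSeries ℂ where
  coeff n := (q : ℂ) ^ n * G.coeff n
  isPWO_support' := G.isPWO_support'.mono (fun n hn => by
    simp only [Function.mem_support] at hn ⊢
    intro h
    exact hn (by rw [h, mul_zero]))

namespace Gauge

open HahnSeries

abbrev LS := LaurentSeries ℂ

variable (q : ℝ)

lemma sigmaQ_coeff (x : LS) (n : ℤ) : (sigmaQ q x).coeff n = (q:ℂ)^n * x.coeff n := rfl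

lemma sigmaQ_add (x y : LS) : sigmaQ q (x + y) = sigmaQ q x + sigmaQ q y := by
  ext n; simp [sigmaQ_coeff, HahnSeries.coeff_add, mul_add]

lemma sigmaQ_zero : sigmaQ q 0 = 0 := by
  ext n; simp [sigmaQ_coeff]

/-- `Low x M` : all coefficients of `x` below `M` vanish. -/
def Low (x : LS) (M : ℤ) : Prop := ∀ i : ℤ, i < M → x.coeff i = 0

noncomputable def diagMul (w : ℤ → ℂ) (x : LS) : LS where
  coeff n := w n * x.coeff n
  isPWO_support' := x.isPWO_support'.mono (fun n hn => by
    simp only [Function.mem_support] at hn ⊢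
    intro h
    exact hn (by rw [h, mul_zero]))

lemma diagMul_coeff (w : ℤ → ℂ) (x : LS) (n : ℤ) :
    (diagMul w x).coeff n = w n * x.coeff n := rfl

lemma diagMul_add (w : ℤ → ℂ) (x y : LS) :
    diagMul w (x + y) = diagMul w x + diagMul w y := by
  ext n; simp [diagMul_coeff, HahnSeries.coeff_add, mul_add]

lemma diagMul_one' (x : LS) : diagMul (fun _ => 1) x = x := by
  ext n; simp [diagMul_coeff]

noncomputable def top (w : ℤ → ℂ) (h s : LS) (x : LS) : LS :=
  diagMul w (h * x + s * sigmaQ q x)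

lemma top_add (w : ℤ → ℂ) (h s x y : LS) :
    top q w h s (x + y) = top q w h s x + top q w h s y := by
  unfold top
  rw [sigmaQ_add, mul_add, mul_add, ← diagMul_add]
  congr 1
  ring

lemma top_zero (w : ℤ → ℂ) (h s : LS) : top q w h s 0 = 0 := by
  unfold top
  rw [mul_zero, sigmaQ_zero, mul_zero, add_zero]
  ext n; simp [diagMul_coeff]

lemma top_sum (w : ℤ → ℂ) (h s : LS) {α : Type*} (t : Finset α) (F : α → LS) :
    top q w h s (∑ k ∈ t, F k) = ∑ k ∈ t, top q w h s (F k) := by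
  induction t using Finset.cons_induction with
  | empty => simp [top_zero]
  | cons a t ha ih => rw [Finset.sum_cons, Finset.sum_cons, top_add, ih]

lemma sum_coeff {α : Type*} (t : Finset α) (F : α → LS) (n : ℤ) :
    (∑ k ∈ t, F k).coeff n = ∑ k ∈ t, (F k).coeff n := by
  induction t using Finset.cons_induction with
  | empty => simp
  | cons a t ha ih => rw [Finset.sum_cons, Finset.sum_cons, HahnSeries.coeff_add, ih]

lemma low_mul {h x : LS} {M : ℤ} (hh : Low h 1) (hx : Low x M) : Low (h * x) (M + 1) := by
  intro i hi
  by_contra hne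
  have hmem : i ∈ (h * x).support := hne
  obtain ⟨a, ha, b, hb, hab⟩ := Set.mem_add.1 (HahnSeries.support_mul_subset hmem)
  have ha1 : ¬ a < 1 := fun hc => ha (hh a hc)
  have hb1 : ¬ b < M := fun hc => hb (hx b hc)
  omega

lemma low_sigma {x : LS} {M : ℤ} (hx : Low x M) : Low (sigmaQ q x) M :=
  fun i hi => by rw [sigmaQ_coeff, hx i hi, mul_zero]

lemma low_diag (w : ℤ → ℂ) {x : LS} {M : ℤ} (hx : Low x M) : Low (diagMul w x) M :=
  fun i hi => by rw [diagMul_coeff, hx i hi, mul_zero]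

lemma low_add {x y : LS} {M : ℤ} (hx : Low x M) (hy : Low y M) : Low (x + y) M :=
  fun i hi => by rw [HahnSeries.coeff_add, hx i hi, hy i hi, add_zero]

lemma low_mono {x : LS} {M M' : ℤ} (hMM : M' ≤ M) (hx : Low x M) : Low x M' :=
  fun i hi => hx i (lt_of_lt_of_le hi hMM)

lemma low_order (x : LS) : Low x x.order :=
  fun _ hi => HahnSeries.coeff_eq_zero_of_lt_order hi

lemma low_zero (M : ℤ) : Low 0 M := fun _ _ => rfl

lemma top_low (w : ℤ → ℂ) {h s x : LS} {M : ℤ} (hh : Low h 1) (hs : Low s 1)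
    (hx : Low x M) : Low (top q w h s x) (M + 1) :=
  low_diag w (low_add (low_mul hh hx) (low_mul hs (low_sigma q hx)))

lemma top_iter_low {w : ℤ → ℂ} {h s c : LS} {n0 : ℤ} (hh : Low h 1) (hs : Low s 1)
    (hc : Low c n0) (k : ℕ) : Low ((top q w h s)^[k] c) (n0 + k) := by
  induction k with
  | zero => simpa using hc
  | succ k ih =>
      rw [Function.iterate_succ_apply']
      have := top_low q w hh hs ih
      refine low_mono ?_ this
      push_cast
      omega

lemma eq_zero_of_fixed {w : ℤ → ℂ} {h s : LS} (hh : Low h 1) (hs : Low s 1)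
    {x : LS} (hx : x = top q w h s x) : x = 0 := by
  by_contra hne
  have h2 : Low (top q w h s x) (x.order + 1) := top_low q w hh hs (low_order x)
  rw [← hx] at h2
  exact (HahnSeries.coeff_order_eq_zero.not.2 hne) (h2 x.order (by omega))

theorem fix_master (w : ℤ → ℂ) (h s : LS) (hh : Low h 1) (hs : Low s 1) (c : LS) :
    ∃ G : LS, (G = c + top q w h s G) ∧ Low G c.order ∧
      (∀ G', G' = c + top q w h s G' → G' = G) := by
  set T := top q w h s with hT
  set n0 := c.order with hn0
  have hiter : ∀ (k : ℕ) (n : ℤ), n < n0 + k → (T^[k] c).coeff n = 0 :=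
    fun k n hn => top_iter_low q hh hs (low_order c) k n hn
  obtain ⟨S, hS⟩ : ∃ S : ℕ → LS, ∀ K, S K = ∑ k ∈ Finset.range K, T^[k] c :=
    ⟨_, fun _ => rfl⟩
  have hSsucc : ∀ K, S (K + 1) = c + T (S K) := by
    intro K
    rw [hS, hS, Finset.sum_range_succ']
    simp only [Function.iterate_succ_apply', Function.iterate_zero_apply]
    rw [hT, top_sum]
    exact add_comm _ _
  have hstab : ∀ (n : ℤ) (K K' : ℕ), K ≤ K' → n < n0 + K →
      (S K').coeff n = (S K).coeff n := by
    intro n K K' hKK' hn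
    rw [hS, hS, sum_coeff, sum_coeff]
    refine (Finset.sum_subset (Finset.range_subset_range.2 hKK') ?_).symm
    intro k hk hknot
    simp only [Finset.mem_range, not_lt] at hk hknot
    exact hiter k n (by omega)
  obtain ⟨G, hGc⟩ : ∃ G : LS, ∀ n, G.coeff n = (S ((n - n0).toNat + 1)).coeff n := by
    refine ⟨⟨fun n => (S ((n - n0).toNat + 1)).coeff n, ?_⟩, fun _ => rfl⟩
    refine Set.IsPWO.mono (Set.IsWF.isPWO
      (BddBelow.wellFoundedOn_lt (bddBelow_Ici (a := n0)))) ?_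
    intro n hn
    simp only [Function.mem_support] at hn
    by_contra hlt
    simp only [Set.mem_Ici, not_le] at hlt
    apply hn
    rw [hS, sum_coeff]
    exact Finset.sum_eq_zero fun k _ => hiter k n (by omega)
  have hGstab : ∀ (n : ℤ) (K : ℕ), n < n0 + K → G.coeff n = (S K).coeff n := by
    intro n K hn
    rw [hGc]
    have h1 : n < n0 + ((n - n0).toNat + 1 : ℕ) := by
      have := Int.self_le_toNat (n - n0); push_cast; push_cast at this; omega
    rcases le_total K ((n - n0).toNat + 1) with hc | hc
    · exact hstab n K _ hc hn
    · exact (hstab n _ K hc h1).symm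
  have hGlow : Low G n0 := by
    intro i hi
    rw [hGstab i 0 (by omega), hS]
    simp
  have hfix : G = c + T G := by
    ext n
    set K : ℕ := (n - n0).toNat + 1 with hK
    have hnK : n < n0 + K := by
      have := Int.self_le_toNat (n - n0); rw [hK]; push_cast; push_cast at this; omega
    have hdiff : Low (G - S K) (n0 + K) := by
      intro i hi
      rw [HahnSeries.coeff_sub, hGstab i K hi, sub_self]
    have hTG : T G = T (S K) + T (G - S K) := by
      rw [hT, ← top_add]; congr 1; ring
    have hzero : (T (G - S K)).coeff n = 0 := by
      rw [hT]
      exact top_low q w hh hs hdiff n (by omega)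
    rw [HahnSeries.coeff_add, hTG, HahnSeries.coeff_add, hzero, add_zero,
      ← HahnSeries.coeff_add, ← hSsucc, hGstab n (K + 1) (by push_cast; omega)]
  refine ⟨G, hfix, hGlow, ?_⟩
  intro G' hG'
  have hsub : G' - G = T (G' - G) := by
    have h2 : T G' = T (G' - G) + T G :=
      (congrArg T (by ring : G' = (G' - G) + G)).trans (top_add q w h s _ _)
    calc G' - G = (c + T G') - (c + T G) := by rw [← hG', ← hfix]
      _ = T G' - T G := by ring
      _ = T (G' - G) := by rw [h2]; ring
  have := eq_zero_of_fixed q hh hs hsub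
  rw [sub_eq_zero] at this
  exact this

/-! ### Scalar equations -/

lemma qpow_ne_one (hq : 1 < q) {n : ℤ} (hn : n ≠ 0) : ((q : ℂ)) ^ n ≠ 1 := by
  intro hc
  have : ((q ^ n : ℝ) : ℂ) = ((1 : ℝ) : ℂ) := by
    rw [Complex.ofReal_zpow, hc, Complex.ofReal_one]
  have h1 : q ^ n = (1 : ℝ) := by exact_mod_cast this
  exact hn ((zpow_eq_one_iff_right₀ (by linarith : (0:ℝ) ≤ q) (by linarith : q ≠ 1)).1 h1)

lemma E1_iff_E2 (a : LS) (ha : a ≠ 0) (v : ℤ) (t : ℂ) (b G : LS) :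
    (sigmaQ q G * single v t = a * G + b) ↔
    (sigmaQ q G * single (v - a.order) ((a.coeff a.order)⁻¹ * t)
       = (single (-a.order) (a.coeff a.order)⁻¹ * a) * G
         + single (-a.order) (a.coeff a.order)⁻¹ * b) := by
  set va := a.order with hva
  set ta := a.coeff a.order with hta'
  have hta : ta ≠ 0 := (HahnSeries.coeff_order_eq_zero.not.2 ha)
  set e : LS := single (-va) ta⁻¹ with he'
  have hsing : e * single v t = single (v - va) (ta⁻¹ * t) := by
    rw [he', single_mul_single]
    congr 1
    ring
  have hinv : single va ta * e = 1 := by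
    rw [he', single_mul_single, add_neg_cancel, mul_inv_cancel₀ hta, single_zero_one]
  constructor
  · intro H
    rw [← hsing]
    linear_combination e * H
  · intro H
    rw [← hsing] at H
    linear_combination (single va ta : LS) * H
      - (sigmaQ q G * single v t - a * G - b) * hinv

lemma low_h {a : LS} (ha : a ≠ 0) :
    Low (single (-a.order) (a.coeff a.order)⁻¹ * a - 1) 1 := by
  set va := a.order
  set ta := a.coeff a.order
  have hta : ta ≠ 0 := (HahnSeries.coeff_order_eq_zero.not.2 ha)
  intro i hi
  have hcoeff : ((single (-va) ta⁻¹ : LS) * a).coeff i = ta⁻¹ * a.coeff (i + va) := by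
    rw [show i = (i + va) + (-va) by ring, coeff_single_mul_add]
    ring_nf
  rw [HahnSeries.coeff_sub, hcoeff, HahnSeries.coeff_one]
  rcases eq_or_lt_of_le (by omega : i ≤ 0) with h0 | h0
  · subst h0
    rw [zero_add, inv_mul_cancel₀ hta]
    simp
  · rw [if_neg (by omega), HahnSeries.coeff_eq_zero_of_lt_order (by omega : i + va < va)]
    simp

theorem scalar1 (hq : 1 < q) (a : LS) (ha : a ≠ 0) (v : ℤ) (t : ℂ) (ht : t ≠ 0)
    (hva : a.order ≤ v)
    (hnr : a.order = v → ∀ n : ℤ, ((q : ℂ)) ^ n * t ≠ a.coeff a.order) (b : LS) :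
    ∃! G : LS, sigmaQ q G * single v t = a * G + b := by
  set va := a.order with hva'
  set ta := a.coeff a.order with hta'
  have hta : ta ≠ 0 := (HahnSeries.coeff_order_eq_zero.not.2 ha)
  set e : LS := single (-va) ta⁻¹ with he'
  set h : LS := e * a - 1 with hh'
  set b' : LS := e * b with hb''
  have hea : e * a = 1 + h := by rw [hh']; ring
  have hLowh : Low h 1 := low_h ha
  have hE : ∀ G : LS, (sigmaQ q G * single v t = a * G + b) ↔
      (sigmaQ q G * single (v - va) (ta⁻¹ * t) = (1 + h) * G + b') :=
    fun G => (E1_iff_E2 q a ha v t b G).trans (by rw [← hva', ← hta', ← he', hea, hb''])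
  rcases eq_or_lt_of_le hva with heq | hlt
  · -- resonant-position case: va = v
    set τ := ta⁻¹ * t with hτ'
    have hp : ∀ n : ℤ, τ * (q : ℂ) ^ n - 1 ≠ 0 := by
      intro n hc
      apply hnr heq n
      have : τ * (q : ℂ) ^ n = 1 := by linear_combination hc
      field_simp [hτ'] at this
      linear_combination ta * this - (q:ℂ)^n * t * (mul_inv_cancel₀ hta)
    set w : ℤ → ℂ := fun n => (τ * (q : ℂ) ^ n - 1)⁻¹ with hw'
    set c : LS := diagMul w b' with hc'
    have hvv : v - va = 0 := by omega
    have hEF : ∀ X : LS,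
        (sigmaQ q X * single (v - va) τ = (1 + h) * X + b') ↔
        (X = c + top q w h 0 X) := by
      intro X
      rw [hvv]
      have hrw : (1 + h) * X = X + h * X := by ring
      constructor
      · intro H
        rw [hrw] at H
        ext n
        have Hn := congrArg (fun y : LS => y.coeff n) H
        simp only [coeff_mul_single_zero, sigmaQ_coeff, HahnSeries.coeff_add] at Hn
        have hpn : (τ * (q : ℂ) ^ n - 1)⁻¹ * (τ * (q : ℂ) ^ n - 1) = 1 :=
          inv_mul_cancel₀ (hp n)
        simp only [HahnSeries.coeff_add, hc', top, diagMul_coeff, HahnSeries.coeff_add,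
          zero_mul, add_zero, hw']
        linear_combination (τ * (q : ℂ) ^ n - 1)⁻¹ * Hn - X.coeff n * hpn
      · intro H
        rw [hrw]
        ext n
        have Hn := congrArg (fun y : LS => y.coeff n) H
        simp only [HahnSeries.coeff_add, hc', top, diagMul_coeff, HahnSeries.coeff_add,
          zero_mul, add_zero, hw'] at Hn
        have hpn : (τ * (q : ℂ) ^ n - 1)⁻¹ * (τ * (q : ℂ) ^ n - 1) = 1 :=
          inv_mul_cancel₀ (hp n)
        simp only [coeff_mul_single_zero, sigmaQ_coeff, HahnSeries.coeff_add]
        linear_combination (τ * (q : ℂ) ^ n - 1) * Hn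
          + ((h * X).coeff n + b'.coeff n) * hpn
    obtain ⟨G, hGfix, -, hGuniq⟩ := fix_master q w h 0 hLowh (low_zero 1) c
    refine ⟨G, (hE G).2 ((hEF G).2 hGfix), ?_⟩
    intro G' hG'
    exact hGuniq G' ((hEF G').1 ((hE G').1 hG'))
  · -- va < v
    set τ := ta⁻¹ * t with hτ'
    set s : LS := single (v - va) τ with hs'
    have hLows : Low s 1 := by
      intro i hi
      rw [hs', coeff_single_of_ne (by omega : i ≠ v - va)]
    have hT : ∀ x : LS, top q (fun _ => 1) (-h) s x = s * sigmaQ q x - h * x := by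
      intro x
      unfold top
      rw [diagMul_one']
      ring
    have hEF : ∀ X : LS,
        (sigmaQ q X * single (v - va) τ = (1 + h) * X + b') ↔
        (X = -b' + top q (fun _ => 1) (-h) s X) := by
      intro X
      rw [hT X, ← hs']
      constructor
      · intro H; linear_combination -H
      · intro H; linear_combination -H
    have hLownegh : Low (-h) 1 := by
      intro i hi
      rw [HahnSeries.coeff_neg, hLowh i hi, neg_zero]
    obtain ⟨G, hGfix, -, hGuniq⟩ := fix_master q (fun _ => 1) (-h) s hLownegh hLows (-b')
    refine ⟨G, (hE G).2 ((hEF G).2 hGfix), ?_⟩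
    intro G' hG'
    exact hGuniq G' ((hEF G').1 ((hE G').1 hG'))

theorem scalar2 (hq : 1 < q) (a : LS) (ha : a ≠ 0) :
    ∃ G : LS, (sigmaQ q G * single a.order (a.coeff a.order) = a * G ∧
        G.coeff 0 = 1 ∧ G.order = 0) ∧
      ∀ X : LS, sigmaQ q X * single a.order (a.coeff a.order) = a * X →
        X.coeff 0 = 1 → X = G := by
  set va := a.order with hva'
  set ta := a.coeff a.order with hta'
  have hta : ta ≠ 0 := (HahnSeries.coeff_order_eq_zero.not.2 ha)
  set e : LS := single (-va) ta⁻¹ with he'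
  set h : LS := e * a - 1 with hh'
  have hea : e * a = 1 + h := by rw [hh']; ring
  have hLowh : Low h 1 := low_h ha
  have hE : ∀ X : LS, (sigmaQ q X * single va ta = a * X) ↔ (sigmaQ q X = (1 + h) * X) := by
    intro X
    have hiff := E1_iff_E2 q a ha va ta 0 X
    constructor
    · intro H
      have H2 := hiff.1 (by rw [H, add_zero])
      rw [← hva', ← hta', ← he', sub_self, inv_mul_cancel₀ hta, single_zero_one,
        mul_one, mul_zero, add_zero, hea] at H2
      exact H2
    · intro H
      have H2 : sigmaQ q X * single (va - a.order) ((a.coeff a.order)⁻¹ * ta)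
          = (single (-a.order) (a.coeff a.order)⁻¹ * a) * X
            + single (-a.order) (a.coeff a.order)⁻¹ * 0 := by
        rw [← hva', ← hta', ← he', sub_self, inv_mul_cancel₀ hta, single_zero_one,
          mul_one, mul_zero, add_zero, hea]
        exact H
      have H3 := hiff.2 H2
      rw [add_zero] at H3
      exact H3
  set w : ℤ → ℂ := fun n => if n = 0 then 0 else (((q:ℂ)) ^ n - 1)⁻¹ with hw'
  obtain ⟨G, hGfix, hGlow, hGuniq⟩ := fix_master q w h 0 hLowh (low_zero 1) 1
  rw [HahnSeries.order_one] at hGlow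
  have hfixcoeff : ∀ n : ℤ, G.coeff n = (1 : LS).coeff n + w n * ((h * G).coeff n) := by
    intro n
    conv_lhs => rw [hGfix]
    simp [top, diagMul_coeff, HahnSeries.coeff_add]
  have hG1 : G.coeff 0 = 1 := by
    rw [hfixcoeff 0, hw']
    simp [HahnSeries.coeff_one]
  have hhG0 : (h * G).coeff 0 = 0 := low_mul hLowh hGlow 0 (by omega)
  have hGeq : sigmaQ q G = (1 + h) * G := by
    rw [show (1 + h) * G = G + h * G by ring]
    ext n
    rw [HahnSeries.coeff_add, sigmaQ_coeff]
    by_cases hn : n = 0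
    · subst hn
      rw [hhG0, add_zero, zpow_zero, one_mul]
    · have hp : (((q:ℂ)) ^ n - 1) ≠ 0 := sub_ne_zero.2 (qpow_ne_one q hq hn)
      have hpn : (((q:ℂ)) ^ n - 1)⁻¹ * (((q:ℂ)) ^ n - 1) = 1 := inv_mul_cancel₀ hp
      have Hn := hfixcoeff n
      rw [HahnSeries.coeff_one, if_neg hn, hw'] at Hn
      simp only [if_neg hn] at Hn
      linear_combination (((q:ℂ)) ^ n - 1) * Hn + (h * G).coeff n * hpn
  have hne : G ≠ 0 := fun hc => by simp [hc] at hG1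
  have horder : G.order = 0 := by
    refine le_antisymm (HahnSeries.order_le_of_coeff_ne_zero ?_) ?_
    · rw [hG1]; exact one_ne_zero
    · by_contra hlt
      push_neg at hlt
      exact (HahnSeries.coeff_order_eq_zero.not.2 hne) (hGlow _ hlt)
  refine ⟨G, ⟨(hE G).2 hGeq, hG1, horder⟩, ?_⟩
  intro X hX hX1
  apply hGuniq
  have hXeq := (hE X).1 hX
  have hXeq' : ∀ n : ℤ, ((q:ℂ)) ^ n * X.coeff n = X.coeff n + (h * X).coeff n := by
    intro n
    have := congrArg (fun y : LS => y.coeff n) hXeq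
    simpa [sigmaQ_coeff, show (1 + h) * X = X + h * X by ring, HahnSeries.coeff_add] using this
  ext n
  simp only [HahnSeries.coeff_add, top, diagMul_coeff, zero_mul, add_zero,
    HahnSeries.coeff_one]
  by_cases hn : n = 0
  · subst hn
    rw [hw']
    simp [hX1]
  · have hp : (((q:ℂ)) ^ n - 1) ≠ 0 := sub_ne_zero.2 (qpow_ne_one q hq hn)
    have hpn : (((q:ℂ)) ^ n - 1)⁻¹ * (((q:ℂ)) ^ n - 1) = 1 := inv_mul_cancel₀ hp
    rw [if_neg hn, hw']
    simp only [if_neg hn]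
    linear_combination (((q:ℂ)) ^ n - 1)⁻¹ * (hXeq' n) - X.coeff n * hpn

end Gauge

/-- with `g_j = 1 + (q-1) f_j` nonzero, orders `v_j = v₀(g_j)` nondecreasing and
the non-resonance condition (`v_j = v_k`, `j ≠ k` ⟹ `t_j/t_k ∉ q^ℤ`), let `C` be the matrix
with diagonal `g_1, …, g_m`, superdiagonal entries `q-1` and zeros elsewhere, and let
`D = Diag(t_1 z^{v_1}, …, t_m z^{v_m})`.  Then there is a unique upper triangular matrix
`Ĝ` of Laurent series, whose diagonal entries have order `0` and leading coefficient `1`,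
with `(σ_q Ĝ) · D = C · Ĝ`; moreover any such `Ĝ` is invertible and
`C = (σ_q Ĝ) · D · Ĝ⁻¹`. -/
theorem exists_unique_formal_gauge_transformation
    (q : ℝ) (hq : 1 < q) (m : ℕ) (hm : 1 ≤ m)
    (f g : Fin m → LaurentSeries ℂ)
    (hgdef : ∀ j, g j = 1 + HahnSeries.C ((q : ℂ) - 1) * f j)
    (hg0 : ∀ j, g j ≠ 0)
    (hmono : ∀ j k : Fin m, j ≤ k → (g j).order ≤ (g k).order)
    (hres : ∀ j k : Fin m, j ≠ k → (g j).order = (g k).order →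
      ∀ n : ℤ, (g j).coeff (g j).order / (g k).coeff (g k).order ≠ (q : ℂ) ^ n)
    (C D : Matrix (Fin m) (Fin m) (LaurentSeries ℂ))
    (hC : ∀ j k : Fin m, C j k =
      if j = k then g j
      else if (k : ℕ) = (j : ℕ) + 1 then HahnSeries.C ((q : ℂ) - 1) else 0)
    (hD : D = Matrix.diagonal fun j =>
      HahnSeries.single ((g j).order) ((g j).coeff ((g j).order))) :
    (∃! G : Matrix (Fin m) (Fin m) (LaurentSeries ℂ),
      (∀ j k : Fin m, k < j → G j k = 0) ∧
      (∀ j : Fin m, (G j j).order = 0 ∧ (G j j).coeff 0 = 1) ∧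
      G.map (sigmaQ q) * D = C * G) ∧
    (∀ G : Matrix (Fin m) (Fin m) (LaurentSeries ℂ),
      ((∀ j k : Fin m, k < j → G j k = 0) ∧
       (∀ j : Fin m, (G j j).order = 0 ∧ (G j j).coeff 0 = 1) ∧
       G.map (sigmaQ q) * D = C * G) →
      IsUnit G ∧ C = G.map (sigmaQ q) * D * G⁻¹) := by
  classical
  subst hD
  have htld : ∀ j, (g j).coeff ((g j).order) ≠ 0 :=
    fun j => (HahnSeries.coeff_order_eq_zero.not.2 (hg0 j))
  -- diagonal solutions
  choose Gd hGd using fun k : Fin m => Gauge.scalar2 q hq (g k) (hg0 k)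
  have hGdeq : ∀ k, sigmaQ q (Gd k) * HahnSeries.single ((g k).order)
      ((g k).coeff ((g k).order)) = g k * Gd k := fun k => (hGd k).1.1
  have hGd1 : ∀ k, (Gd k).coeff 0 = 1 := fun k => (hGd k).1.2.1
  have hGdord : ∀ k, (Gd k).order = 0 := fun k => (hGd k).1.2.2
  have hGduniq : ∀ k, ∀ X : LaurentSeries ℂ,
      sigmaQ q X * HahnSeries.single ((g k).order) ((g k).coeff ((g k).order)) = g k * X →
      X.coeff 0 = 1 → X = Gd k := fun k => (hGd k).2
  -- off-diagonal solutions
  have hoff : ∀ j k : Fin m, j < k → ∀ b : LaurentSeries ℂ, ∃! G : LaurentSeries ℂ,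
      sigmaQ q G * HahnSeries.single ((g k).order) ((g k).coeff ((g k).order))
        = g j * G + b := by
    intro j k hjk b
    refine Gauge.scalar1 q hq (g j) (hg0 j) _ _ (htld k) (hmono j k (le_of_lt hjk)) ?_ b
    intro hord n hcon
    refine hres j k (ne_of_lt hjk) hord n ?_
    rw [div_eq_iff (htld k), ← hcon]
  have hoff' : ∀ (j k : Fin m) (b : LaurentSeries ℂ), ∃ G : LaurentSeries ℂ,
      j < k → sigmaQ q G * HahnSeries.single ((g k).order) ((g k).coeff ((g k).order))
        = g j * G + b := by
    intro j k b
    by_cases hjk : j < k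
    · obtain ⟨G, hG, -⟩ := hoff j k hjk b
      exact ⟨G, fun _ => hG⟩
    · exact ⟨0, fun hc => absurd hc hjk⟩
  choose sol hsol using hoff'
  -- the column construction
  obtain ⟨colA, hcol0, hcolS⟩ : ∃ colA : Fin m → ℕ → LaurentSeries ℂ,
      (∀ k, colA k 0 = Gd k) ∧
      (∀ k d, colA k (d + 1) = if hd : (d + 1 : ℕ) ≤ (k : ℕ) then
          sol ⟨(k : ℕ) - (d + 1), Nat.lt_of_le_of_lt (Nat.sub_le _ _) k.isLt⟩ k
            (HahnSeries.C ((q : ℂ) - 1) * colA k d) else 0) :=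
    ⟨fun k => Nat.rec (Gd k) (fun d ih => if hd : (d + 1 : ℕ) ≤ (k : ℕ) then
        sol ⟨(k : ℕ) - (d + 1), Nat.lt_of_le_of_lt (Nat.sub_le _ _) k.isLt⟩ k
          (HahnSeries.C ((q : ℂ) - 1) * ih) else 0),
      fun _ => rfl, fun _ _ => rfl⟩
  obtain ⟨Ghat, hGhat⟩ : ∃ GM : Matrix (Fin m) (Fin m) (LaurentSeries ℂ),
      ∀ j k, GM j k = if (j : ℕ) ≤ (k : ℕ) then colA k ((k : ℕ) - (j : ℕ)) else 0 :=
    ⟨Matrix.of fun j k => if (j : ℕ) ≤ (k : ℕ) then colA k ((k : ℕ) - (j : ℕ)) else 0,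
      fun _ _ => rfl⟩
  have hG_lower : ∀ j k : Fin m, k < j → Ghat j k = 0 := by
    intro j k hkj
    rw [Fin.lt_def] at hkj
    rw [hGhat, if_neg (by omega)]
  have hG_diag : ∀ k, Ghat k k = Gd k := by
    intro k
    rw [hGhat, if_pos le_rfl, Nat.sub_self, hcol0]
  have hG_upper : ∀ (j k : Fin m), j < k → ∀ (j' : Fin m), (j' : ℕ) = (j : ℕ) + 1 →
      Ghat j k = sol j k (HahnSeries.C ((q : ℂ) - 1) * Ghat j' k) := by
    intro j k hjk j' hj'
    have hlt : (j : ℕ) < (k : ℕ) := by rwa [Fin.lt_def] at hjk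
    rw [hGhat, if_pos (by omega)]
    obtain ⟨d, hd⟩ : ∃ d : ℕ, (k : ℕ) - (j : ℕ) = d + 1 := ⟨(k : ℕ) - (j : ℕ) - 1, by omega⟩
    rw [hd, hcolS, dif_pos (by omega : d + 1 ≤ (k : ℕ))]
    have h2 : colA k d = Ghat j' k := by
      rw [hGhat, if_pos (by omega)]
      congr 1
      omega
    rw [h2]
    congr 1
    exact Fin.ext (by simp only []; omega)
  -- the structure of rows of C
  have hCmul : ∀ (X : Matrix (Fin m) (Fin m) (LaurentSeries ℂ)) (j k : Fin m),
      (C * X) j k = g j * X j k +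
        (if hj : (j : ℕ) + 1 < m then
          HahnSeries.C ((q : ℂ) - 1) * X ⟨(j : ℕ) + 1, hj⟩ k else 0) := by
    intro X j k
    rw [Matrix.mul_apply]
    by_cases hj : (j : ℕ) + 1 < m
    · rw [dif_pos hj]
      have hne : j ≠ (⟨(j : ℕ) + 1, hj⟩ : Fin m) := by
        intro hc
        have := congrArg Fin.val hc
        simp only [] at this
        omega
      have hsum : ∑ l, C j l * X l k
          = ∑ l ∈ ({j, ⟨(j : ℕ) + 1, hj⟩} : Finset (Fin m)), C j l * X l k := by
        refine (Finset.sum_subset (Finset.subset_univ _) ?_).symm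
        intro l _ hl
        simp only [Finset.mem_insert, Finset.mem_singleton] at hl
        push_neg at hl
        rw [hC j l, if_neg (fun hc => hl.1 hc.symm), if_neg ?_, zero_mul]
        intro hc
        exact hl.2 (Fin.ext (by simpa using hc))
      rw [hsum, Finset.sum_pair hne, hC j j, if_pos rfl, hC j ⟨(j : ℕ) + 1, hj⟩,
        if_neg hne, if_pos (by simp)]
    · rw [dif_neg hj, add_zero]
      rw [Finset.sum_eq_single j]
      · rw [hC j j, if_pos rfl]
      · intro l _ hl
        have hlm := l.isLt
        rw [hC j l, if_neg (fun hc => hl hc.symm),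
          if_neg (by omega : ¬ (l : ℕ) = (j : ℕ) + 1), zero_mul]
      · intro hju
        exact absurd (Finset.mem_univ j) hju
  have hLHS : ∀ (X : Matrix (Fin m) (Fin m) (LaurentSeries ℂ)) (j k : Fin m),
      (X.map (sigmaQ q) * Matrix.diagonal (fun j =>
        HahnSeries.single ((g j).order) ((g j).coeff ((g j).order)))) j k
        = sigmaQ q (X j k) * HahnSeries.single ((g k).order) ((g k).coeff ((g k).order)) := by
    intro X j k
    rw [Matrix.mul_diagonal, Matrix.map_apply]
  -- Ghat satisfies the equation
  have hGhatEq : Ghat.map (sigmaQ q) * Matrix.diagonal (fun j =>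
      HahnSeries.single ((g j).order) ((g j).coeff ((g j).order))) = C * Ghat := by
    refine Matrix.ext fun j k => ?_
    rw [hLHS, hCmul]
    rcases lt_trichotomy j k with hjk | hjk | hjk
    · have hlt : (j : ℕ) < (k : ℕ) := by rwa [Fin.lt_def] at hjk
      have hjm : (j : ℕ) + 1 < m := lt_of_le_of_lt hlt k.isLt
      rw [dif_pos hjm, hG_upper j k hjk ⟨(j : ℕ) + 1, hjm⟩ rfl]
      exact hsol j k _ hjk
    · subst hjk
      have h0 : (if hj : (j : ℕ) + 1 < m then
          HahnSeries.C ((q : ℂ) - 1) * Ghat ⟨(j : ℕ) + 1, hj⟩ j else 0) = 0 := by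
        by_cases hj : (j : ℕ) + 1 < m
        · rw [dif_pos hj, hG_lower ⟨(j : ℕ) + 1, hj⟩ j (by rw [Fin.lt_def]; simp), mul_zero]
        · rw [dif_neg hj]
      rw [h0, add_zero, hG_diag]
      exact hGdeq j
    · have h0 : (if hj : (j : ℕ) + 1 < m then
          HahnSeries.C ((q : ℂ) - 1) * Ghat ⟨(j : ℕ) + 1, hj⟩ k else 0) = 0 := by
        by_cases hj : (j : ℕ) + 1 < m
        · rw [dif_pos hj, hG_lower ⟨(j : ℕ) + 1, hj⟩ k
            (by rw [Fin.lt_def] at hjk ⊢; simp; omega), mul_zero]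
        · rw [dif_neg hj]
      rw [hG_lower j k hjk, h0, add_zero, mul_zero, Gauge.sigmaQ_zero, zero_mul]
  -- uniqueness
  have huniq : ∀ G' : Matrix (Fin m) (Fin m) (LaurentSeries ℂ),
      ((∀ j k : Fin m, k < j → G' j k = 0) ∧
       (∀ j : Fin m, (G' j j).order = 0 ∧ (G' j j).coeff 0 = 1) ∧
       G'.map (sigmaQ q) * Matrix.diagonal (fun j =>
        HahnSeries.single ((g j).order) ((g j).coeff ((g j).order))) = C * G') →
      G' = Ghat := by
    rintro G' ⟨hlow', hdiag', heq'⟩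
    have hent : ∀ j k : Fin m,
        sigmaQ q (G' j k) * HahnSeries.single ((g k).order) ((g k).coeff ((g k).order))
          = g j * G' j k +
            (if hj : (j : ℕ) + 1 < m then
              HahnSeries.C ((q : ℂ) - 1) * G' ⟨(j : ℕ) + 1, hj⟩ k else 0) := by
      intro j k
      rw [← hLHS, heq', hCmul]
    have hcol : ∀ d : ℕ, ∀ j k : Fin m, (k : ℕ) = (j : ℕ) + d → G' j k = Ghat j k := by
      intro d
      induction d with
      | zero =>
        intro j k hk
        have hjk : j = k := Fin.ext (by omega)
        subst hjk
        rw [hG_diag]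
        refine hGduniq j (G' j j) ?_ (hdiag' j).2
        have h0 : (if hj : (j : ℕ) + 1 < m then
            HahnSeries.C ((q : ℂ) - 1) * G' ⟨(j : ℕ) + 1, hj⟩ j else 0) = 0 := by
          by_cases hj : (j : ℕ) + 1 < m
          · rw [dif_pos hj, hlow' ⟨(j : ℕ) + 1, hj⟩ j (by rw [Fin.lt_def]; simp), mul_zero]
          · rw [dif_neg hj]
        have := hent j j
        rw [h0, add_zero] at this
        exact this
      | succ d ih =>
        intro j k hk
        have hjk : j < k := by rw [Fin.lt_def]; omega
        have hjm : (j : ℕ) + 1 < m := by have := k.isLt; omega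
        have hih : G' ⟨(j : ℕ) + 1, hjm⟩ k = Ghat ⟨(j : ℕ) + 1, hjm⟩ k :=
          ih ⟨(j : ℕ) + 1, hjm⟩ k (by simp only []; omega)
        have h1 : sigmaQ q (G' j k) * HahnSeries.single ((g k).order)
            ((g k).coeff ((g k).order)) = g j * G' j k
              + HahnSeries.C ((q : ℂ) - 1) * Ghat ⟨(j : ℕ) + 1, hjm⟩ k := by
          have := hent j k
          rw [dif_pos hjm, hih] at this
          exact this
        have h2 : sigmaQ q (Ghat j k) * HahnSeries.single ((g k).order)
            ((g k).coeff ((g k).order)) = g j * Ghat j k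
              + HahnSeries.C ((q : ℂ) - 1) * Ghat ⟨(j : ℕ) + 1, hjm⟩ k := by
          rw [hG_upper j k hjk ⟨(j : ℕ) + 1, hjm⟩ rfl]
          exact hsol j k _ hjk
        exact (hoff j k hjk _).unique h1 h2
    refine Matrix.ext fun j k => ?_
    rcases le_or_gt (j : ℕ) (k : ℕ) with hjk | hjk
    · exact hcol ((k : ℕ) - (j : ℕ)) j k (by omega) ▸ rfl
    · rw [hlow' j k (by rwa [Fin.lt_def]), hG_lower j k (by rwa [Fin.lt_def])]
  constructor
  · exact ⟨Ghat, ⟨hG_lower, fun j => by rw [hG_diag]; exact ⟨hGdord j, hGd1 j⟩, hGhatEq⟩,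
      huniq⟩
  · rintro G ⟨hlow, hdiagp, heqp⟩
    have hdet : G.det = ∏ i, G i i :=
      Matrix.det_of_upperTriangular (fun i j hij => hlow i j hij)
    have hdetunit : IsUnit G.det := by
      rw [hdet]
      refine isUnit_iff_ne_zero.2 (Finset.prod_ne_zero_iff.2 ?_)
      intro i _ hc
      have h1 := (hdiagp i).2
      rw [hc] at h1
      simp at h1
    refine ⟨(Matrix.isUnit_iff_isUnit_det G).2 hdetunit, ?_⟩
    have hinv : G * G⁻¹ = 1 := Matrix.mul_nonsing_inv G hdetunit
    calc C = C * 1 := by rw [Matrix.mul_one]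
      _ = C * (G * G⁻¹) := by rw [hinv]
      _ = (C * G) * G⁻¹ := by rw [Matrix.mul_assoc]
      _ = (G.map (sigmaQ q) * Matrix.diagonal (fun j =>
            HahnSeries.single ((g j).order) ((g j).coeff ((g j).order)))) * G⁻¹ := by
          rw [heqp]
end

section
/- Let q > 1 be real, b ∈ ℂ with b ≠ 0, and w ∈ ℤ. Let A be a nonzero formal Laurent series over ℂ with order v := v₀(A) and leading coefficient a := t₀(A), and let H be a formal Laurent series over ℂ. Assume v ≤ w, and, in case v = w, assume additionally that a/b ∉ {q^n : n ∈ ℤ}. Then there exists a unique formal Laurent series G over ℂ such that b · z^{w} · σ_q G = A · G + H; coefficientwise, this means: for every n ∈ ℤ, b · q^{n−w} · G_{n−w} = Σ_{i+j=n} A_i G_j + H_n. -/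
lemma mul_coeff_Icc (A G : LaurentSeries ℂ) {M N : ℤ}
    (hA : ∀ m : ℤ, m < M → A.coeff m = 0) (hG : ∀ m : ℤ, m < N → G.coeff m = 0) (n : ℤ) :
    (A * G).coeff n = ∑ j ∈ Finset.Icc N (n - M), A.coeff (n - j) * G.coeff j := by
  rw [HahnSeries.coeff_mul]
  set S := Finset.antidiagonal A.isPWO_support G.isPWO_support n with hS
  have himg : S.image Prod.snd ⊆ Finset.Icc N (n - M) := by
    intro j hj
    simp only [Finset.mem_image] at hj
    obtain ⟨ij, hij, rfl⟩ := hj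
    rw [Finset.mem_addAntidiagonal] at hij
    obtain ⟨h1, h2, h3⟩ := hij
    rw [HahnSeries.mem_support] at h1 h2
    rw [Finset.mem_Icc]
    constructor
    · by_contra h; exact h2 (hG _ (by omega))
    · by_contra h; exact h1 (hA _ (by omega))
  have hinj : ∀ x ∈ S, ∀ y ∈ S, Prod.snd x = Prod.snd y → x = y := by
    intro x hx y hy hxy
    rw [Finset.mem_addAntidiagonal] at hx hy
    obtain ⟨_, _, h3⟩ := hx
    obtain ⟨_, _, h3'⟩ := hy
    exact Prod.ext (by omega) hxy
  calc ∑ ij ∈ S, A.coeff ij.1 * G.coeff ij.2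
      = ∑ ij ∈ S, A.coeff (n - ij.2) * G.coeff ij.2 := by
        apply Finset.sum_congr rfl
        intro ij hij
        rw [Finset.mem_addAntidiagonal] at hij
        obtain ⟨_, _, h3⟩ := hij
        have : ij.1 = n - ij.2 := by omega
        rw [this]
    _ = ∑ j ∈ S.image Prod.snd, A.coeff (n - j) * G.coeff j :=
        (Finset.sum_image (g := Prod.snd) (f := fun j => A.coeff (n - j) * G.coeff j) hinj).symm
    _ = ∑ j ∈ Finset.Icc N (n - M), A.coeff (n - j) * G.coeff j := by
        apply Finset.sum_subset himg
        intro j hj hj'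
        by_contra hne
        apply hj'
        rw [Finset.mem_image]
        refine ⟨(n - j, j), ?_, rfl⟩
        rw [Finset.mem_addAntidiagonal]
        have hne' := mul_ne_zero_iff.mp hne
        exact ⟨(HahnSeries.mem_support _ _).mpr hne'.1, (HahnSeries.mem_support _ _).mpr hne'.2,
          by omega⟩

noncomputable def gAux (q b : ℂ) (w v N : ℤ) (A H : LaurentSeries ℂ) (c : ℤ → ℂ) : ℕ → ℂ
  | k =>
    (c (N + k))⁻¹ *
      ((if _h : v < w ∧ 0 ≤ (k : ℤ) + v - w then
          b * q ^ (N + (k : ℤ) + v - w) * gAux q b w v N A H c ((k : ℤ) + v - w).toNat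
        else 0)
       - (∑ i ∈ (Finset.range k).attach,
            A.coeff ((k : ℤ) + v - (i : ℤ)) * gAux q b w v N A H c i)
       - H.coeff (N + (k : ℤ) + v))
  termination_by k => k
  decreasing_by
  · omega
  · exact Finset.mem_range.mp i.2

/-- let `q > 1` be real, `b ∈ ℂ` nonzero, `w ∈ ℤ`, `A` a nonzero formal Laurent
series with order `v = v₀(A)` and leading coefficient `a = t₀(A)`, and `H` any Laurent series.
If `v ≤ w` and, in case `v = w`, `a/b ∉ q^ℤ`, then there exists a unique Laurent series `G`
with `b · z^w · σ_q G = A · G + H`. -/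
theorem exists_unique_laurent_qdifference_solution
    (q : ℝ) (hq : 1 < q) (b : ℂ) (hb : b ≠ 0) (w : ℤ)
    (A H : LaurentSeries ℂ) (hA : A ≠ 0)
    (hvw : A.order ≤ w)
    (hres : A.order = w → ∀ n : ℤ, A.coeff A.order / b ≠ (q : ℂ) ^ n) :
    ∃! G : LaurentSeries ℂ, HahnSeries.single w b * sigmaQ q G = A * G + H := by
  set v := A.order with hv
  set a := A.coeff A.order with ha0
  have ha : a ≠ 0 := HahnSeries.coeff_order_eq_zero.not.mpr hA
  have hq0 : (q : ℂ) ≠ 0 := by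
    simp only [ne_eq, Complex.ofReal_eq_zero]
    linarith
  set c : ℤ → ℂ := fun k => if v = w then a - b * (q : ℂ) ^ k else a with hcdef
  have hc : ∀ k : ℤ, c k ≠ 0 := by
    intro k
    show (if v = w then a - b * (q : ℂ) ^ k else a) ≠ 0
    by_cases hvw' : v = w
    · rw [if_pos hvw']
      intro h
      apply hres hvw' k
      rw [div_eq_iff hb]
      linear_combination h
    · rw [if_neg hvw']; exact ha
  have hAc : ∀ m : ℤ, m < v → A.coeff m = 0 := fun m hm =>
    HahnSeries.coeff_eq_zero_of_lt_order hm
  obtain ⟨N, hHN⟩ : ∃ N : ℤ, ∀ m : ℤ, m < N + v → H.coeff m = 0 := by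
    by_cases hH : H = 0
    · exact ⟨0, fun m _ => by simp [hH]⟩
    · exact ⟨H.order - v, fun m hm => HahnSeries.coeff_eq_zero_of_lt_order (by omega)⟩
  set g : ℕ → ℂ := gAux (q : ℂ) b w v N A H c with hgdef
  set G : LaurentSeries ℂ :=
    { coeff := fun m => if N ≤ m then g (m - N).toNat else 0
      isPWO_support' := by
        apply Set.IsPWO.mono (Set.IsWF.isPWO ((bddBelow_Ici (a := N)).wellFoundedOn_lt))
        intro m hm
        simp only [Function.mem_support] at hm
        by_contra h
        simp only [Set.mem_Ici, not_le] at h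
        exact hm (if_neg (not_le.mpr h)) } with hGdef
  have hGc : ∀ m : ℤ, m < N → G.coeff m = 0 := by
    intro m hm
    show (if N ≤ m then g (m - N).toNat else 0) = 0
    rw [if_neg (not_le.mpr hm)]
  have hGg : ∀ k : ℕ, G.coeff (N + (k : ℤ)) = g k := by
    intro k
    show (if N ≤ N + (k : ℤ) then g (N + (k : ℤ) - N).toNat else 0) = g k
    rw [if_pos (by omega)]
    congr 1
    omega
  -- the key recursion identity
  have hGcoeff : ∀ k : ℤ, N ≤ k → c k * G.coeff k =
      (if v < w then b * (q : ℂ) ^ (k + v - w) * G.coeff (k + v - w) else 0)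
      - (∑ j ∈ Finset.Icc N (k - 1), A.coeff (k + v - j) * G.coeff j)
      - H.coeff (k + v) := by
    intro k hk
    obtain ⟨k', rfl⟩ : ∃ k' : ℕ, k = N + (k' : ℤ) := ⟨(k - N).toNat, by omega⟩
    rw [hGg k', hgdef, gAux, mul_inv_cancel_left₀ (hc _)]
    congr 1
    congr 1
    · -- the leading shifted term
      by_cases hvw' : v < w
      · rw [if_pos hvw']
        by_cases hge : 0 ≤ (k' : ℤ) + v - w
        · rw [dif_pos ⟨hvw', hge⟩]
          have : N + (k' : ℤ) + v - w = N + (((k' : ℤ) + v - w).toNat : ℤ) := by omega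
          rw [this, hGg, ← hgdef]
        · rw [dif_neg (by tauto)]
          rw [hGc (N + (k' : ℤ) + v - w) (by omega), mul_zero]
      · rw [if_neg hvw', dif_neg (by tauto)]
    · -- the sum
      rw [Finset.sum_attach (Finset.range k')
        (fun i => A.coeff ((k' : ℤ) + v - (i : ℤ)) * g i)]
      refine Finset.sum_nbij' (fun i => N + (i : ℤ)) (fun j => (j - N).toNat) ?_ ?_ ?_ ?_ ?_
      · intro i hi
        rw [Finset.mem_range] at hi
        rw [Finset.mem_Icc]
        omega
      · intro j hj
        rw [Finset.mem_Icc] at hj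
        rw [Finset.mem_range]
        omega
      · intro i hi; rw [Finset.mem_range] at hi; omega
      · intro j hj; rw [Finset.mem_Icc] at hj; omega
      · intro i hi
        rw [Finset.mem_range] at hi
        show A.coeff ((k' : ℤ) + v - (i : ℤ)) * g i
            = A.coeff (N + (k' : ℤ) + v - (N + (i : ℤ))) * G.coeff (N + (i : ℤ))
        rw [hGg i, show N + (k' : ℤ) + v - (N + (i : ℤ)) = (k' : ℤ) + v - (i : ℤ) by ring]
  -- existence
  have hsol : HahnSeries.single w b * sigmaQ q G = A * G + H := by
    ext n
    rw [HahnSeries.coeff_add]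
    have hl : (HahnSeries.single w b * sigmaQ q G).coeff n
        = b * ((q : ℂ) ^ (n - w) * G.coeff (n - w)) := by
      have h := HahnSeries.coeff_single_mul_add (r := b) (x := sigmaQ q G) (a := n - w) (b := w)
      rw [show n - w + w = n by ring] at h
      rw [h]
      rfl
    rw [hl, mul_coeff_Icc A G hAc hGc n]
    by_cases hk : n - v < N
    · rw [Finset.Icc_eq_empty (by omega), Finset.sum_empty, hHN n (by omega),
        hGc (n - w) (by omega)]
      ring
    · have hk' : N ≤ n - v := not_lt.mp hk
      have key := hGcoeff (n - v) hk'
      rw [show n - v + v = n by ring] at key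
      have hsplit : Finset.Icc N (n - v) = insert (n - v) (Finset.Icc N (n - v - 1)) := by
        ext j
        simp only [Finset.mem_Icc, Finset.mem_insert]
        omega
      rw [hsplit, Finset.sum_insert (by simp only [Finset.mem_Icc]; omega),
        show n - (n - v) = v by ring]
      have haC : A.coeff v = a := by rw [hv]
      rw [haC]
      rcases lt_or_eq_of_le hvw with hvw' | hvw'
      · rw [if_pos hvw'] at key
        rw [hcdef] at key
        simp only [if_neg (ne_of_lt hvw')] at key
        linear_combination -key
      · rw [if_neg (by omega)] at key
        rw [hcdef] at key
        simp only [if_pos hvw'] at key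
        rw [← hvw']
        linear_combination -key
  refine ⟨G, hsol, ?_⟩
  intro G' hG'
  by_contra hne
  have hDne : G' - G ≠ 0 := sub_ne_zero.mpr hne
  set D := G' - G with hDdef
  have hσ : sigmaQ q D = sigmaQ q G' - sigmaQ q G := by
    ext m
    show (q : ℂ) ^ m * (G' - G).coeff m
        = (q : ℂ) ^ m * G'.coeff m - (q : ℂ) ^ m * G.coeff m
    rw [HahnSeries.coeff_sub]
    ring
  have hhom : HahnSeries.single w b * sigmaQ q D = A * D := by
    rw [hσ, mul_sub, hG', hsol, hDdef, mul_sub]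
    ring
  set m := D.order with hm
  have hd : D.coeff m ≠ 0 := HahnSeries.coeff_order_eq_zero.not.mpr hDne
  have hDc : ∀ m' : ℤ, m' < m → D.coeff m' = 0 := fun m' hm' =>
    HahnSeries.coeff_eq_zero_of_lt_order hm'
  have hcoe := congrArg (fun x : LaurentSeries ℂ => x.coeff (m + v)) hhom
  have hl : (HahnSeries.single w b * sigmaQ q D).coeff (m + v)
      = b * ((q : ℂ) ^ (m + v - w) * D.coeff (m + v - w)) := by
    have h := HahnSeries.coeff_single_mul_add (r := b) (x := sigmaQ q D) (a := m + v - w) (b := w)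
    rw [show m + v - w + w = m + v by ring] at h
    rw [h]
    rfl
  rw [hl, mul_coeff_Icc A D hAc hDc (m + v), show m + v - v = m by ring, Finset.Icc_self,
    Finset.sum_singleton, show m + v - m = v by ring] at hcoe
  rcases lt_or_eq_of_le hvw with hvw' | hvw'
  · rw [hDc (m + v - w) (by omega), mul_zero, mul_zero] at hcoe
    exact mul_ne_zero ha hd hcoe.symm
  · rw [show m + v - w = m by omega] at hcoe
    apply hres hvw' m
    rw [div_eq_iff hb]
    have : (b * (q : ℂ) ^ m) * D.coeff m = a * D.coeff m := by linear_combination hcoe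
    have := mul_right_cancel₀ hd this
    linear_combination -this
end

section
/- Let d, a, ε, q₁ be as in the context and D := D_{d,a,ε}. For each q ∈ (1, q₁) let R(·,q) : D → ℂ be analytic. Assume: (i) there exist a″ ∈ (0, a) and q₀ ∈ (1, q₁] such that for all q ∈ (1, q₀) and all z ∈ D with qz ∈ D and |qz| < a″, one has |R(qz, q)| > |R(z, q)|; (ii) R(·,q) converges uniformly on compact subsets of D, as q → 1, to some function R̃ : D → ℂ. Then the family R(·,q) has the boundedness property 𝔹_{d,a,ε}: for every compact K ⊆ D there exist q₀′ ∈ (1, q₁], N₀ ∈ ℕ and M₀ > 0 such that |R(q^{−N} z, q)| < M₀ for all q ∈ (1, q₀′), all integers N > N₀ and all z ∈ K. -/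
open Filter Set

/-- The domain `D_{d,a,ε}` of nonzero complex numbers of modulus `< a` whose principal
argument lies in `(d-ε, d+ε)`. -/
def domainD (d a ε : ℝ) : Set ℂ :=
  {z : ℂ | z ≠ 0 ∧ ‖z‖ < a ∧ Complex.arg z ∈ Set.Ioo (d - ε) (d + ε)}

/-- The boundedness property `𝔹_{d,a,ε}` for a family `f(·,q)` indexed by `q ∈ (1,q₁)`. -/
def BddProp (d a ε q₁ : ℝ) (f : ℂ → ℝ → ℂ) : Prop :=
  ∀ K : Set ℂ, K ⊆ domainD d a ε → IsCompact K →
    ∃ q₀ ∈ Set.Ioc (1 : ℝ) q₁, ∃ N₀ : ℕ, ∃ M₀ : ℝ, 0 < M₀ ∧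
      ∀ q ∈ Set.Ioo (1 : ℝ) q₀, ∀ N : ℕ, N₀ < N → ∀ z ∈ K,
        ‖f (((q : ℂ) ^ N)⁻¹ * z) q‖ < M₀

/-- Uniform convergence of `f(·,q)` to `g` on compact subsets of `D_{d,a,ε}` as `q → 1⁺`. -/
def UnifConvQ1 (d a ε : ℝ) (f : ℂ → ℝ → ℂ) (g : ℂ → ℂ) : Prop :=
  ∀ K : Set ℂ, K ⊆ domainD d a ε → IsCompact K → ∀ δ : ℝ, 0 < δ →
    ∃ q₀ : ℝ, 1 < q₀ ∧ ∀ q ∈ Set.Ioo (1 : ℝ) q₀, ∀ z ∈ K, ‖f z q - g z‖ < δ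

/-- if an analytic family `R(·,q)` satisfies `|R(qz,q)| > |R(z,q)|` near the
origin and converges uniformly on compacts to some `R̃` as `q → 1`, then the family has the
boundedness property `𝔹_{d,a,ε}`. -/
theorem bddProp_of_increasing_modulus_and_unif_conv
    (d a ε q₁ : ℝ) (ha : 0 < a) (hε : 0 < ε)
    (hd₁ : -Real.pi < d - ε) (hd₂ : d + ε < Real.pi) (hq₁ : 1 < q₁)
    (R : ℂ → ℝ → ℂ) (Rt : ℂ → ℂ)
    (hRanal : ∀ q ∈ Set.Ioo (1 : ℝ) q₁, AnalyticOnNhd ℂ (fun z => R z q) (domainD d a ε))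
    (hmono : ∃ a'' ∈ Set.Ioo (0 : ℝ) a, ∃ q₀ ∈ Set.Ioc (1 : ℝ) q₁,
      ∀ q ∈ Set.Ioo (1 : ℝ) q₀, ∀ z ∈ domainD d a ε,
        (q : ℂ) * z ∈ domainD d a ε → ‖(q : ℂ) * z‖ < a'' →
        ‖R z q‖ < ‖R ((q : ℂ) * z) q‖)
    (hconv : UnifConvQ1 d a ε R Rt) :
    BddProp d a ε q₁ R := by
  intro K hKD hKc
  obtain ⟨a'', ⟨ha''0, ha''a⟩, q₀, ⟨hq₀1, hq₀le⟩, hmon⟩ := hmono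
  have hq₁0 : (0:ℝ) < q₁ := lt_trans one_pos hq₁
  set c : ℝ := a'' / q₁ with hcdef
  have hc0 : 0 < c := div_pos ha''0 hq₁0
  have hcq₁ : c * q₁ = a'' := div_mul_cancel₀ _ (ne_of_gt hq₁0)
  have hca'' : c < a'' := by
    rw [hcdef]; exact div_lt_self ha''0 hq₁
  have hca : c < a := lt_trans hca'' ha''a
  -- scaling preserves the domain
  have hscale : ∀ z ∈ domainD d a ε, ∀ t : ℝ, 0 < t →
      ‖(t:ℂ) * z‖ < a → ((t:ℂ) * z) ∈ domainD d a ε := by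
    intro z hz t ht habs
    refine ⟨mul_ne_zero (by exact_mod_cast ht.ne') hz.1, habs, ?_⟩
    rw [Complex.arg_real_mul _ ht]
    exact hz.2.2
  set L : Set ℂ := (fun p : ℝ × ℂ => (p.1 : ℂ) * p.2) '' (Set.Icc (c/a) 1 ×ˢ K) with hLdef
  have hLc : IsCompact L := (isCompact_Icc.prod hKc).image (by fun_prop)
  have hLD : L ⊆ domainD d a ε := by
    rintro w ⟨⟨t, z⟩, ⟨⟨ht0, ht1⟩, hzK⟩, rfl⟩
    have hz := hKD hzK
    have ht0' : 0 < t := lt_of_lt_of_le (div_pos hc0 ha) ht0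
    refine hscale z hz t ht0' ?_
    have habs : ‖(t:ℂ) * z‖ = t * ‖z‖ := by
      rw [norm_mul, Complex.norm_real, Real.norm_eq_abs, abs_of_pos ht0']
    rw [habs]
    calc t * ‖z‖ ≤ 1 * ‖z‖ :=
          mul_le_mul_of_nonneg_right ht1 (norm_nonneg _)
      _ = ‖z‖ := one_mul _
      _ < a := hz.2.1
  obtain ⟨q₂, hq₂1, hq₂⟩ := hconv L hLD hLc 1 one_pos
  set q' : ℝ := min ((1+q₂)/2) ((1+q₁)/2) with hq'def
  have hq'1 : 1 < q' := lt_min (by linarith) (by linarith)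
  have hq'q₂ : q' < q₂ := lt_of_le_of_lt (min_le_left _ _) (by linarith)
  have hq'q₁ : q' < q₁ := lt_of_le_of_lt (min_le_right _ _) (by linarith)
  obtain ⟨C, hC⟩ := hLc.exists_bound_of_continuousOn
    (((hRanal q' ⟨hq'1, hq'q₁⟩).continuousOn).mono hLD)
  refine ⟨min q₀ (min q₂ q₁), ⟨lt_min hq₀1 (lt_min hq₂1 hq₁),
    le_trans (min_le_right _ _) (min_le_right _ _)⟩, 0, max C 0 + 2, by positivity, ?_⟩
  intro q hq N hN z hzK
  obtain ⟨hq1, hqlt⟩ := hq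
  have hqq₀ : q < q₀ := lt_of_lt_of_le hqlt (min_le_left _ _)
  have hqq₂ : q < q₂ := lt_of_lt_of_le hqlt (le_trans (min_le_right _ _) (min_le_left _ _))
  have hqq₁ : q < q₁ := lt_of_lt_of_le hqlt (le_trans (min_le_right _ _) (min_le_right _ _))
  have hq0 : (0:ℝ) < q := lt_trans one_pos hq1
  have hqC0 : ((q:ℂ)) ≠ 0 := by exact_mod_cast hq0.ne'
  -- uniform bound on L
  have hBL : ∀ w ∈ L, ‖R w q‖ < max C 0 + 2 := by
    intro w hw
    have h1 := hq₂ q ⟨hq1, hqq₂⟩ w hw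
    have h2 := hq₂ q' ⟨hq'1, hq'q₂⟩ w hw
    have h3 := hC w hw
    have e : R w q = (R w q - Rt w) - (R w q' - Rt w) + R w q' := by ring
    have hC0 : C ≤ max C 0 := le_max_left _ _
    calc ‖R w q‖
        = ‖(R w q - Rt w) - (R w q' - Rt w) + R w q'‖ := by rw [← e]
      _ ≤ ‖(R w q - Rt w) - (R w q' - Rt w)‖ + ‖R w q'‖ :=
          norm_add_le _ _
      _ ≤ (‖R w q - Rt w‖ + ‖R w q' - Rt w‖) + ‖R w q'‖ :=
          add_le_add_left (norm_sub_le _ _) _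
      _ < max C 0 + 2 := by linarith
  have hzD := hKD hzK
  have hz0 : (0:ℝ) < ‖z‖ := norm_pos_iff.mpr hzD.1
  have habsz : ‖z‖ < a := hzD.2.1
  -- key induction
  have key : ∀ M : ℕ, ‖R (((q : ℂ) ^ M)⁻¹ * z) q‖ < max C 0 + 2 := by
    intro M
    induction M with
    | zero =>
        simp only [pow_zero, inv_one, one_mul]
        refine hBL z ⟨(1, z), ⟨⟨?_, le_refl 1⟩, hzK⟩, by simp⟩
        exact le_of_lt ((div_lt_one ha).2 hca)
    | succ M ih =>
        set t : ℝ := (q ^ (M+1))⁻¹ with htdef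
        have ht0 : 0 < t := by positivity
        have ht1 : t ≤ 1 := by
          rw [htdef]
          exact inv_le_one_of_one_le₀ (one_le_pow₀ hq1.le)
        have hcast : ((t:ℝ):ℂ) = ((q:ℂ)^(M+1))⁻¹ := by rw [htdef, Complex.ofReal_inv, Complex.ofReal_pow]
        set w : ℂ := ((q : ℂ) ^ (M+1))⁻¹ * z with hwdef
        have hweq : w = ((t:ℝ):ℂ) * z := by rw [hcast]
        have habsw : ‖w‖ = t * ‖z‖ := by
          rw [hweq, norm_mul, Complex.norm_real, Real.norm_eq_abs, abs_of_pos ht0]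
        have habswa : ‖w‖ < a := by
          rw [habsw]
          calc t * ‖z‖ ≤ 1 * ‖z‖ :=
                mul_le_mul_of_nonneg_right ht1 (norm_nonneg _)
            _ = ‖z‖ := one_mul _
            _ < a := habsz
        have hwD : w ∈ domainD d a ε := by
          rw [hweq]; exact hscale z hzD t ht0 (by rw [← hweq]; exact habswa)
        have hid : (q:ℂ) * w = ((q:ℂ)^M)⁻¹ * z := by
          rw [hwdef, pow_succ]
          field_simp
        by_cases hcase : c ≤ ‖w‖
        · -- w lies in L
          refine hBL w ⟨(t, z), ⟨⟨?_, ht1⟩, hzK⟩, hweq.symm⟩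
          rw [div_le_iff₀ ha]
          calc c ≤ ‖w‖ := hcase
            _ = t * ‖z‖ := habsw
            _ ≤ t * a := mul_le_mul_of_nonneg_left habsz.le ht0.le
        · push_neg at hcase
          have hqwD : (q:ℂ) * w ∈ domainD d a ε := by
            rw [hid, show (((q:ℂ)^M)⁻¹ : ℂ) = (((q^M)⁻¹ : ℝ) : ℂ) from by push_cast; ring]
            refine hscale z hzD _ (by positivity) ?_
            rw [norm_mul, Complex.norm_real, Real.norm_eq_abs, abs_of_pos (by positivity : (0:ℝ) < (q^M)⁻¹)]
            calc (q^M)⁻¹ * ‖z‖ ≤ 1 * ‖z‖ := by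
                  apply mul_le_mul_of_nonneg_right _ (norm_nonneg _)
                  exact inv_le_one_of_one_le₀ (one_le_pow₀ hq1.le)
              _ = ‖z‖ := one_mul _
              _ < a := habsz
          have habsqw : ‖(q:ℂ) * w‖ < a'' := by
            rw [norm_mul, Complex.norm_real, Real.norm_eq_abs, abs_of_pos hq0, ← hcq₁]
            calc q * ‖w‖ < q * c := by
                  exact mul_lt_mul_of_pos_left hcase hq0
              _ ≤ c * q₁ := by nlinarith

          have hstep := hmon q ⟨hq1, hqq₀⟩ w hwD hqwD habsqw
          rw [hid] at hstep
          exact lt_trans hstep ih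
  exact key N
end

section
/- Let q > 1 be real. The series e_q(z) := Σ_{n=0}^{∞} z^n/[n]_q! converges for every z ∈ ℂ and defines an entire function which satisfies the product formula e_q(z) = Π_{n=0}^{∞} (1 + (q−1) q^{−n−1} z) for all z ∈ ℂ. Consequently, the zeros of e_q are exactly the points q^{n}/(1−q) for integers n ≥ 1, and each of these is a simple zero. -/
/-- `[l]_q = 1 + q + ⋯ + q^(l-1)`. -/
noncomputable def qNat (q : ℝ) (l : ℕ) : ℝ := ∑ i ∈ Finset.range l, q ^ i

/-- `[n]_q! = ∏_{l=1}^{n} [l]_q`. -/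
noncomputable def qFactorial (q : ℝ) : ℕ → ℝ
  | 0 => 1
  | n + 1 => qFactorial q n * qNat q (n + 1)

/-- The complex `q`-exponential `e_q(z) = Σ_{n=0}^∞ z^n/[n]_q!`. -/
noncomputable def qExpC (q : ℝ) (z : ℂ) : ℂ := ∑' n : ℕ, z ^ n / (qFactorial q n : ℂ)

section aux
variable {q : ℝ} (hq : 1 < q)
include hq

lemma qNat_pos (l : ℕ) : 0 < qNat q (l + 1) := by
  apply Finset.sum_pos (fun i _ => pow_pos (by linarith) i) (by simp)

lemma le_qNat (l : ℕ) : q ^ l ≤ qNat q (l + 1) := by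
  apply Finset.single_le_sum (f := fun i => q ^ i)
    (fun i _ => le_of_lt (pow_pos (by linarith) i)) (Finset.self_mem_range_succ l)

lemma qFactorial_pos (n : ℕ) : 0 < qFactorial q n := by
  induction n with
  | zero => exact one_pos
  | succ n ih => exact mul_pos ih (qNat_pos hq n)

lemma summable_real (r : ℝ) (hr : 0 ≤ r) :
    Summable (fun n => r ^ n / qFactorial q n) := by
  obtain ⟨N, hN⟩ := ((tendsto_pow_atTop_atTop_of_one_lt hq).eventually_ge_atTop
    (2 * r)).exists
  apply summable_of_ratio_norm_eventually_le (r := 2⁻¹) (by norm_num)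
  filter_upwards [Filter.eventually_ge_atTop N] with n hn
  have hFn := qFactorial_pos hq n
  have hNn := qNat_pos hq n
  have h2r : 2 * r ≤ qNat q (n + 1) :=
    hN.trans ((pow_le_pow_right₀ hq.le hn).trans (le_qNat hq n))
  have key : r ^ (n+1) / qFactorial q (n+1) ≤ 2⁻¹ * (r ^ n / qFactorial q n) := by
    have : qFactorial q (n+1) = qFactorial q n * qNat q (n+1) := rfl
    rw [this, pow_succ, div_mul_div_comm (r ^ n) (qFactorial q n) r (qNat q (n+1)) |>.symm]
    rw [mul_comm (2:ℝ)⁻¹]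
    apply mul_le_mul_of_nonneg_left _ (div_nonneg (pow_nonneg hr n) hFn.le)
    rw [div_le_iff₀ hNn]
    linarith
  calc ‖r ^ (n+1) / qFactorial q (n+1)‖ = r ^ (n+1) / qFactorial q (n+1) := by
        rw [Real.norm_eq_abs, abs_of_nonneg (div_nonneg (pow_nonneg hr _) (qFactorial_pos hq _).le)]
    _ ≤ 2⁻¹ * (r ^ n / qFactorial q n) := key
    _ = 2⁻¹ * ‖r ^ n / qFactorial q n‖ := by
        rw [Real.norm_eq_abs, abs_of_nonneg (div_nonneg (pow_nonneg hr _) hFn.le)]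

lemma norm_term (z : ℂ) (n : ℕ) :
    ‖z ^ n / (qFactorial q n : ℂ)‖ = ‖z‖ ^ n / qFactorial q n := by
  rw [norm_div, norm_pow, Complex.norm_real, Real.norm_eq_abs,
    abs_of_pos (qFactorial_pos hq n)]

lemma summable_C (z : ℂ) : Summable (fun n : ℕ => z ^ n / (qFactorial q n : ℂ)) := by
  apply Summable.of_norm
  simpa only [norm_term hq] using summable_real hq ‖z‖ (norm_nonneg z)

lemma qExpC_differentiable : Differentiable ℂ (qExpC q) := by
  intro z₀
  have hR : ‖z₀‖ < ‖z₀‖ + 1 := by linarith [norm_nonneg z₀]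
  have hd : DifferentiableOn ℂ (fun w : ℂ => ∑' n : ℕ, w ^ n / (qFactorial q n : ℂ))
      (Metric.ball 0 (‖z₀‖ + 1)) := by
    apply Complex.differentiableOn_tsum_of_summable_norm
      (u := fun n => (‖z₀‖ + 1) ^ n / qFactorial q n)
      (summable_real hq _ (by positivity))
      (fun n => ((differentiable_pow n).div_const _).differentiableOn) Metric.isOpen_ball
    intro n w hw
    rw [norm_term hq]
    gcongr
    · exact (qFactorial_pos hq n).le
    · exact le_of_lt (by simpa using hw)
  have : DifferentiableAt ℂ (qExpC q) z₀ := by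
    exact hd.differentiableAt (Metric.isOpen_ball.mem_nhds (by simp [hR]))
  exact this

omit hq in
lemma qExpC_zero : qExpC q 0 = 1 := by
  rw [qExpC, tsum_eq_single 0 (fun n hn => by simp [zero_pow hn])]
  simp [qFactorial]

lemma term_identity (n : ℕ) (z : ℂ) :
    z ^ (n+1) / (qFactorial q (n+1) : ℂ) =
      (z * (q:ℂ)⁻¹) ^ (n+1) / (qFactorial q (n+1) : ℂ) +
      ((q:ℂ) - 1) * (q:ℂ)⁻¹ * z * ((z * (q:ℂ)⁻¹) ^ n / (qFactorial q n : ℂ)) := by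
  have hq0 : (0:ℝ) < q := by linarith
  have hQ : (q:ℂ) ≠ 0 := by exact_mod_cast hq0.ne'
  have hFn : (qFactorial q n : ℂ) ≠ 0 := by exact_mod_cast (qFactorial_pos hq n).ne'
  have hNn : (qNat q (n+1) : ℂ) ≠ 0 := by exact_mod_cast (qNat_pos hq n).ne'
  have hF : (qFactorial q (n+1) : ℂ) = (qFactorial q n : ℂ) * (qNat q (n+1) : ℂ) := by
    have : qFactorial q (n+1) = qFactorial q n * qNat q (n+1) := rfl
    exact_mod_cast congrArg (Complex.ofReal) this
  have hkey : ((q:ℂ) - 1) * (qNat q (n+1) : ℂ) = (q:ℂ) ^ (n+1) - 1 := by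
    have := geom_sum_mul (q:ℝ) (n+1)
    have h2 : qNat q (n+1) * (q - 1) = q ^ (n+1) - 1 := this
    have := congrArg (Complex.ofReal) h2
    push_cast at this
    linear_combination this
  have hQp : ((q:ℂ)) ^ (n+1) ≠ 0 := pow_ne_zero _ hQ
  have hQn : ((q:ℂ)) ^ n ≠ 0 := pow_ne_zero _ hQ
  rw [hF, mul_pow, mul_pow, inv_pow, inv_pow]
  set F := (qFactorial q n : ℂ) with hFdef
  set N := (qNat q (n+1) : ℂ) with hNdef
  set Q := (q : ℂ) with hQdef
  have hD : F * N * (Q * Q^n) ≠ 0 := mul_ne_zero (mul_ne_zero hFn hNn) (mul_ne_zero hQ hQn)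
  have main : z^(n+1) * (Q * Q^n) = z^(n+1) + (Q-1) * z^(n+1) * N := by
    have hx : Q^(n+1) = Q * Q^n := by ring
    rw [hx] at hkey
    linear_combination (-(z^(n+1))) * hkey
  have t1 : z^(n+1) / (F * N * (Q * Q^n)) = z^(n+1) * (Q ^ (n+1))⁻¹ / (F * N) := by
    field_simp
    ring_nf
    try tauto
  have t2 : (Q-1) * z^(n+1) * N / (F * N * (Q * Q^n))
      = (Q - 1) * Q⁻¹ * z * (z ^ n * (Q ^ n)⁻¹ / F) := by
    field_simp
    ring_nf
    try tauto
  calc z ^ (n+1) / (F * N)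
      = z^(n+1) * (Q * Q^n) / (F * N * (Q * Q^n)) := by
        rw [div_eq_div_iff (mul_ne_zero hFn hNn) hD]; ring
    _ = (z^(n+1) + (Q-1) * z^(n+1) * N) / (F * N * (Q * Q^n)) := by rw [main]
    _ = z^(n+1) / (F * N * (Q * Q^n)) + (Q-1) * z^(n+1) * N / (F * N * (Q * Q^n)) := add_div _ _ _
    _ = z ^ (n+1) * (Q ^ (n+1))⁻¹ / (F * N) + (Q - 1) * Q⁻¹ * z * (z ^ n * (Q ^ n)⁻¹ / F) := by
        rw [t1, t2]

lemma funeq (z : ℂ) :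
    qExpC q z = (1 + ((q:ℂ) - 1) * (q:ℂ)⁻¹ * z) * qExpC q (z * (q:ℂ)⁻¹) := by
  set w := z * (q:ℂ)⁻¹ with hw
  have hs1 : Summable (fun n : ℕ => z ^ n / (qFactorial q n : ℂ)) := summable_C hq z
  have hs2 : Summable (fun n : ℕ => w ^ n / (qFactorial q n : ℂ)) := summable_C hq w
  have hs2' : Summable (fun n : ℕ => w ^ (n+1) / (qFactorial q (n+1) : ℂ)) :=
    (summable_nat_add_iff 1).mpr hs2
  have hs2'' : Summable (fun n : ℕ => ((q:ℂ) - 1) * (q:ℂ)⁻¹ * z * (w ^ n / (qFactorial q n : ℂ))) :=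
    hs2.mul_left _
  rw [qExpC, qExpC]
  calc (∑' n : ℕ, z ^ n / (qFactorial q n : ℂ))
      = z ^ 0 / (qFactorial q 0 : ℂ) + ∑' n : ℕ, z ^ (n+1) / (qFactorial q (n+1) : ℂ) :=
        hs1.tsum_eq_zero_add
    _ = w ^ 0 / (qFactorial q 0 : ℂ) + ∑' n : ℕ, (w ^ (n+1) / (qFactorial q (n+1) : ℂ) +
          ((q:ℂ) - 1) * (q:ℂ)⁻¹ * z * (w ^ n / (qFactorial q n : ℂ))) := by
        rw [tsum_congr (fun n => term_identity hq n z)]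
        simp [hw]
    _ = w ^ 0 / (qFactorial q 0 : ℂ) + ((∑' n : ℕ, w ^ (n+1) / (qFactorial q (n+1) : ℂ)) +
          ∑' n : ℕ, ((q:ℂ) - 1) * (q:ℂ)⁻¹ * z * (w ^ n / (qFactorial q n : ℂ))) := by
        rw [hs2'.tsum_add hs2'']
    _ = (w ^ 0 / (qFactorial q 0 : ℂ) + ∑' n : ℕ, w ^ (n+1) / (qFactorial q (n+1) : ℂ)) +
          ((q:ℂ) - 1) * (q:ℂ)⁻¹ * z * ∑' n : ℕ, w ^ n / (qFactorial q n : ℂ) := by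
        rw [tsum_mul_left]; ring
    _ = (∑' n : ℕ, w ^ n / (qFactorial q n : ℂ)) +
          ((q:ℂ) - 1) * (q:ℂ)⁻¹ * z * ∑' n : ℕ, w ^ n / (qFactorial q n : ℂ) := by
        rw [← hs2.tsum_eq_zero_add]
    _ = (1 + ((q:ℂ) - 1) * (q:ℂ)⁻¹ * z) * ∑' n : ℕ, w ^ n / (qFactorial q n : ℂ) := by ring

lemma prodeq (N : ℕ) (z : ℂ) :
    qExpC q z = (∏ n ∈ Finset.range N, (1 + ((q:ℂ) - 1) * ((q:ℂ) ^ (n+1))⁻¹ * z)) *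
      qExpC q (z * ((q:ℂ)⁻¹) ^ N) := by
  have hQ : (q:ℂ) ≠ 0 := by
    exact_mod_cast (show (0:ℝ) < q by linarith).ne'
  induction N with
  | zero => simp
  | succ N ih =>
    rw [ih, Finset.prod_range_succ, funeq hq (z * ((q:ℂ)⁻¹) ^ N)]
    have h1 : z * ((q:ℂ)⁻¹) ^ N * (q:ℂ)⁻¹ = z * ((q:ℂ)⁻¹) ^ (N+1) := by ring
    have h2 : ((q:ℂ) - 1) * (q:ℂ)⁻¹ * (z * ((q:ℂ)⁻¹) ^ N)
        = ((q:ℂ) - 1) * ((q:ℂ) ^ (N+1))⁻¹ * z := by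
      rw [inv_pow]
      ring
    rw [h1, h2]
    ring

omit hq in
lemma hasProd_zero_of_factor_zero {f : ℕ → ℂ} {n0 : ℕ} (h : f n0 = 0) : HasProd f 0 := by
  have hev : ∀ᶠ s in Filter.atTop, (∏ i ∈ s, f i) = 0 :=
    Filter.eventually_atTop.2 ⟨{n0}, fun s hs =>
      Finset.prod_eq_zero (Finset.singleton_subset_iff.mp hs) h⟩
  exact (tendsto_const_nhds : Filter.Tendsto (fun _ : Finset ℕ => (0:ℂ)) _ _).congr'
    (hev.mono fun s hs => hs.symm)

lemma summable_cz (z : ℂ) :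
    Summable (fun n : ℕ => ((q:ℂ) - 1) * ((q:ℂ) ^ (n+1))⁻¹ * z) := by
  have hQ : (q:ℂ) ≠ 0 := by exact_mod_cast (show (0:ℝ) < q by linarith).ne'
  have hnorm : ‖(q:ℂ)⁻¹‖ < 1 := by
    rw [norm_inv, Complex.norm_real, Real.norm_eq_abs, abs_of_pos (by linarith)]
    rw [inv_lt_one_iff₀]
    right; exact hq
  have := (summable_geometric_of_norm_lt_one hnorm).mul_left (((q:ℂ) - 1) * (q:ℂ)⁻¹ * z)
  apply this.congr
  intro n
  rw [inv_pow]
  ring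

lemma summable_log (z : ℂ) :
    Summable (fun n : ℕ => Complex.log (1 + ((q:ℂ) - 1) * ((q:ℂ) ^ (n+1))⁻¹ * z)) := by
  have hsc := summable_cz hq z
  have hev : ∀ᶠ n in Filter.atTop, ‖((q:ℂ) - 1) * ((q:ℂ) ^ (n+1))⁻¹ * z‖ ≤ 1/2 := by
    have := hsc.tendsto_atTop_zero.norm
    simp only [norm_zero] at this
    exact this.eventually_le_const (by norm_num)
  apply Summable.of_norm_bounded_eventually_nat (g := fun n => 3/2 * ‖((q:ℂ) - 1) * ((q:ℂ) ^ (n+1))⁻¹ * z‖)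
    (hsc.norm.mul_left _)
  filter_upwards [hev] with n hn
  exact Complex.norm_log_one_add_half_le_self hn

lemma multipliable_factors (z : ℂ) :
    Multipliable (fun n : ℕ => 1 + ((q:ℂ) - 1) * ((q:ℂ) ^ (n+1))⁻¹ * z) := by
  by_cases hz : ∀ n : ℕ, 1 + ((q:ℂ) - 1) * ((q:ℂ) ^ (n+1))⁻¹ * z ≠ 0
  · exact Complex.multipliable_of_summable_log (summable_log hq z)
  · push_neg at hz
    obtain ⟨n0, hn0⟩ := hz
    exact ⟨0, hasProd_zero_of_factor_zero hn0⟩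

lemma tprod_ne_zero (z : ℂ) (hz : ∀ n : ℕ, 1 + ((q:ℂ) - 1) * ((q:ℂ) ^ (n+1))⁻¹ * z ≠ 0) :
    (∏' n : ℕ, (1 + ((q:ℂ) - 1) * ((q:ℂ) ^ (n+1))⁻¹ * z)) ≠ 0 := by
  have := Complex.cexp_tsum_eq_tprod
    (f := fun n => 1 + ((q:ℂ) - 1) * ((q:ℂ) ^ (n+1))⁻¹ * z)
    (fun n => hz n) (summable_log hq z)
  have h2 := this
  rw [← h2]
  exact Complex.exp_ne_zero _

lemma product_formula (z : ℂ) :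
    qExpC q z = ∏' n : ℕ, (1 + ((q:ℂ) - 1) * ((q:ℂ) ^ (n+1))⁻¹ * z) := by
  have hnorm : ‖(q:ℂ)⁻¹‖ < 1 := by
    rw [norm_inv, Complex.norm_real, Real.norm_eq_abs, abs_of_pos (by linarith)]
    rw [inv_lt_one_iff₀]
    right; exact hq
  have h1 : Filter.Tendsto (fun N => ∏ n ∈ Finset.range N,
      (1 + ((q:ℂ) - 1) * ((q:ℂ) ^ (n+1))⁻¹ * z)) Filter.atTop
      (nhds (∏' n : ℕ, (1 + ((q:ℂ) - 1) * ((q:ℂ) ^ (n+1))⁻¹ * z))) :=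
    (multipliable_factors hq z).hasProd.tendsto_prod_nat
  have h2 : Filter.Tendsto (fun N : ℕ => z * ((q:ℂ)⁻¹) ^ N) Filter.atTop (nhds 0) := by
    have := (tendsto_pow_atTop_nhds_zero_of_norm_lt_one hnorm).const_mul z
    simpa using this
  have h3 : Filter.Tendsto (fun N : ℕ => qExpC q (z * ((q:ℂ)⁻¹) ^ N)) Filter.atTop (nhds 1) := by
    have hc : Filter.Tendsto (qExpC q) (nhds 0) (nhds 1) := by
      have := ((qExpC_differentiable hq).continuous.continuousAt (x := (0:ℂ))).tendsto
      rwa [qExpC_zero] at this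
    exact hc.comp h2
  have h4 : Filter.Tendsto (fun N : ℕ => (∏ n ∈ Finset.range N,
      (1 + ((q:ℂ) - 1) * ((q:ℂ) ^ (n+1))⁻¹ * z)) * qExpC q (z * ((q:ℂ)⁻¹) ^ N)) Filter.atTop
      (nhds ((∏' n : ℕ, (1 + ((q:ℂ) - 1) * ((q:ℂ) ^ (n+1))⁻¹ * z)) * 1)) := h1.mul h3
  rw [mul_one] at h4
  have h5 : (fun N : ℕ => (∏ n ∈ Finset.range N,
      (1 + ((q:ℂ) - 1) * ((q:ℂ) ^ (n+1))⁻¹ * z)) * qExpC q (z * ((q:ℂ)⁻¹) ^ N))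
      = fun _ : ℕ => qExpC q z := funext fun N => (prodeq hq N z).symm
  rw [h5] at h4
  exact tendsto_nhds_unique tendsto_const_nhds h4

lemma factor_zero_iff (n : ℕ) (z : ℂ) :
    1 + ((q:ℂ) - 1) * ((q:ℂ) ^ (n+1))⁻¹ * z = 0 ↔ z = (q:ℂ) ^ (n+1) / (1 - (q:ℂ)) := by
  have hQ : (q:ℂ) ≠ 0 := by exact_mod_cast (show (0:ℝ) < q by linarith).ne'
  have hQp : ((q:ℂ)) ^ (n+1) ≠ 0 := pow_ne_zero _ hQ
  have hQ1 : (1:ℂ) - (q:ℂ) ≠ 0 := by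
    have : ((1 - q : ℝ) : ℂ) ≠ 0 := by exact_mod_cast (show (1:ℝ) - q ≠ 0 by linarith)
    push_cast at this
    exact this
  rw [eq_div_iff hQ1]
  constructor
  · intro h
    field_simp at h
    linear_combination -h
  · intro h
    field_simp
    linear_combination -h

lemma pow_ne_one' (n : ℕ) (hn : 1 ≤ n) : ((q:ℂ)) ^ n ≠ 1 := by
  intro h
  have h2 := congrArg norm h
  rw [norm_pow, Complex.norm_real, Real.norm_eq_abs, abs_of_pos (by linarith), norm_one] at h2
  have h3 : (1:ℝ) < q ^ n := one_lt_pow₀ hq (by omega)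
  linarith

lemma zeros_iff (z : ℂ) :
    qExpC q z = 0 ↔ ∃ n : ℕ, 1 ≤ n ∧ z = (q:ℂ) ^ n / (1 - (q:ℂ)) := by
  rw [product_formula hq z]
  constructor
  · intro h
    by_contra hno
    push_neg at hno
    exact (tprod_ne_zero hq z (fun n hfac =>
      hno (n+1) (Nat.le_add_left 1 n) ((factor_zero_iff hq n z).mp hfac))) h
  · rintro ⟨n, hn, rfl⟩
    obtain ⟨m, rfl⟩ : ∃ m, n = m + 1 := ⟨n - 1, by omega⟩
    exact (hasProd_zero_of_factor_zero
      ((factor_zero_iff hq m _).mpr rfl)).tprod_eq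

lemma deriv_funeq (w : ℂ) :
    deriv (qExpC q) w = ((q:ℂ) - 1) * (q:ℂ)⁻¹ * qExpC q (w * (q:ℂ)⁻¹)
      + (1 + ((q:ℂ) - 1) * (q:ℂ)⁻¹ * w) * (deriv (qExpC q) (w * (q:ℂ)⁻¹) * (q:ℂ)⁻¹) := by
  have hdiff := qExpC_differentiable hq
  have hA : HasDerivAt (fun z : ℂ => 1 + ((q:ℂ) - 1) * (q:ℂ)⁻¹ * z)
      (((q:ℂ) - 1) * (q:ℂ)⁻¹) w := by
    simpa using (((hasDerivAt_id w).const_mul (((q:ℂ) - 1) * (q:ℂ)⁻¹)).const_add 1)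
  have hB : HasDerivAt (fun z : ℂ => qExpC q (z * (q:ℂ)⁻¹))
      (deriv (qExpC q) (w * (q:ℂ)⁻¹) * (q:ℂ)⁻¹) w :=
    by have h1 := (hdiff (w * (q:ℂ)⁻¹)).hasDerivAt; exact h1.comp w (hasDerivAt_mul_const (x := w) (q:ℂ)⁻¹)
  have hC := hA.mul hB
  have hfun : qExpC q = fun z : ℂ => (1 + ((q:ℂ) - 1) * (q:ℂ)⁻¹ * z) * qExpC q (z * (q:ℂ)⁻¹) :=
    funext (funeq hq)
  conv_lhs => rw [hfun]
  exact hC.deriv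

lemma w0_ne_zero : qExpC q (1 / (1 - (q:ℂ))) ≠ 0 := by
  have hQ1 : (1:ℂ) - (q:ℂ) ≠ 0 := by
    have : ((1 - q : ℝ) : ℂ) ≠ 0 := by exact_mod_cast (show (1:ℝ) - q ≠ 0 by linarith)
    push_cast at this
    exact this
  intro h
  obtain ⟨n, hn, heq⟩ := (zeros_iff hq _).mp h
  have h1 : (1:ℂ) * (1 - (q:ℂ)) = (q:ℂ) ^ n * (1 - (q:ℂ)) :=
    (div_eq_div_iff hQ1 hQ1).mp heq
  exact pow_ne_one' hq n hn (mul_right_cancel₀ hQ1 h1).symm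

lemma deriv_ne_zero (n : ℕ) (hn : 1 ≤ n) :
    deriv (qExpC q) ((q:ℂ) ^ n / (1 - (q:ℂ))) ≠ 0 := by
  have hQ : (q:ℂ) ≠ 0 := by exact_mod_cast (show (0:ℝ) < q by linarith).ne'
  have hQ1 : (1:ℂ) - (q:ℂ) ≠ 0 := by
    have : ((1 - q : ℝ) : ℂ) ≠ 0 := by exact_mod_cast (show (1:ℝ) - q ≠ 0 by linarith)
    push_cast at this
    exact this
  have hQ1' : ((q:ℂ)) - 1 ≠ 0 := by
    have : ((q - 1 : ℝ) : ℂ) ≠ 0 := by exact_mod_cast (show (q:ℝ) - 1 ≠ 0 by linarith)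
    push_cast at this
    exact this
  induction n, hn using Nat.le_induction with
  | base =>
    have e1 : (q:ℂ) ^ 1 / (1 - (q:ℂ)) * (q:ℂ)⁻¹ = 1 / (1 - (q:ℂ)) := by
      field_simp
      try ring
    have e2 : 1 + ((q:ℂ) - 1) * (q:ℂ)⁻¹ * ((q:ℂ) ^ 1 / (1 - (q:ℂ))) = 0 := by
      field_simp
      try ring
    rw [deriv_funeq hq _, e1, e2, zero_mul, add_zero]
    exact mul_ne_zero (mul_ne_zero hQ1' (inv_ne_zero hQ)) (w0_ne_zero hq)
  | succ n hn ih =>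
    have e1 : (q:ℂ) ^ (n+1) / (1 - (q:ℂ)) * (q:ℂ)⁻¹ = (q:ℂ) ^ n / (1 - (q:ℂ)) := by
      rw [pow_succ]
      field_simp
      try ring
    have e2 : qExpC q ((q:ℂ) ^ n / (1 - (q:ℂ))) = 0 := (zeros_iff hq _).mpr ⟨n, hn, rfl⟩
    have e3 : 1 + ((q:ℂ) - 1) * (q:ℂ)⁻¹ * ((q:ℂ) ^ (n+1) / (1 - (q:ℂ))) = 1 - (q:ℂ) ^ n := by
      rw [pow_succ]
      field_simp
      try ring
    have h1n : (1:ℂ) - (q:ℂ) ^ n ≠ 0 := by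
      intro h
      exact pow_ne_one' hq n hn (by linear_combination -h)
    rw [deriv_funeq hq _, e1, e2, e3, mul_zero, zero_add]
    exact mul_ne_zero h1n (mul_ne_zero ih (inv_ne_zero hQ))

end aux

/-- for real `q > 1`, the series `e_q(z) = Σ z^n/[n]_q!` converges for every
`z ∈ ℂ` and defines an entire function satisfying the product formula
`e_q(z) = Π_{n=0}^∞ (1 + (q-1) q^{-n-1} z)`; its zeros are exactly the points
`q^n/(1-q)` for integers `n ≥ 1`, each of which is a simple zero. -/
theorem qExpC_entire_product_zeros (q : ℝ) (hq : 1 < q) :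
    (∀ z : ℂ, Summable fun n : ℕ => z ^ n / (qFactorial q n : ℂ)) ∧
    AnalyticOnNhd ℂ (qExpC q) Set.univ ∧
    (∀ z : ℂ, Multipliable fun n : ℕ => 1 + ((q : ℂ) - 1) * ((q : ℂ) ^ (n + 1))⁻¹ * z) ∧
    (∀ z : ℂ, qExpC q z = ∏' n : ℕ, (1 + ((q : ℂ) - 1) * ((q : ℂ) ^ (n + 1))⁻¹ * z)) ∧
    (∀ z : ℂ, qExpC q z = 0 ↔ ∃ n : ℕ, 1 ≤ n ∧ z = (q : ℂ) ^ n / (1 - (q : ℂ))) ∧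
    (∀ n : ℕ, 1 ≤ n → deriv (qExpC q) ((q : ℂ) ^ n / (1 - (q : ℂ))) ≠ 0) := by
  exact ⟨summable_C hq,
    ((qExpC_differentiable hq).differentiableOn).analyticOnNhd isOpen_univ,
    multipliable_factors hq, product_formula hq, zeros_iff hq, deriv_ne_zero hq⟩
end

section
/- Let d, a, ε be as in the context and D := D_{d,a,ε}. Let b, c : D → ℂ be analytic with b nowhere zero on D. Assume: (i) for every η > 0 there exists ρ > 0 such that |c(w)/b(w)| ≤ η for all w ∈ D with |w| < ρ; (ii) for every z ∈ D the improper integral F(z) := lim_{δ→0⁺} ∫_{δ}^{1} c(sz)/(b(sz) · s) ds exists. Then the function u(z) := b(z) · F(z) is analytic on D and satisfies, for all z ∈ D, the linear differential relation z u′(z) = (z b′(z)/b(z)) · u(z) + c(z). -/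
open Filter Set intervalIntegral

section StripPrimitive
open Complex

/-- On an open product strip `{ζ | ζ.re ∈ s, ζ.im ∈ t}`, any complex-differentiable
function has a primitive. -/
lemma strip_primitive (s t : Set ℝ) (hs : IsOpen s) (ht : IsOpen t)
    (hs' : s.OrdConnected) (ht' : t.OrdConnected) (G : ℂ → ℂ)
    (hG : ∀ ζ : ℂ, ζ.re ∈ s → ζ.im ∈ t → DifferentiableAt ℂ G ζ)
    (x₀ y₀ : ℝ) (hx₀ : x₀ ∈ s) (hy₀ : y₀ ∈ t) :
    ∃ H : ℂ → ℂ, ∀ ζ : ℂ, ζ.re ∈ s → ζ.im ∈ t → HasDerivAt H (G ζ) ζ := by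
  have hGc : ∀ ζ : ℂ, ζ.re ∈ s → ζ.im ∈ t → ContinuousAt G ζ :=
    fun ζ h1 h2 => (hG ζ h1 h2).continuousAt
  -- horizontal and vertical integrability
  have intH : ∀ x₁ x₂ y : ℝ, x₁ ∈ s → x₂ ∈ s → y ∈ t →
      IntervalIntegrable (fun x : ℝ => G (x + y * I)) MeasureTheory.volume x₁ x₂ := by
    intro x₁ x₂ y h1 h2 h3
    apply ContinuousOn.intervalIntegrable
    intro x hx
    have hxs : x ∈ s := hs'.uIcc_subset h1 h2 hx
    exact ContinuousAt.continuousWithinAt <|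
      show ContinuousAt (G ∘ fun x : ℝ => (x : ℂ) + y * I) x from
        ContinuousAt.comp (hGc _ (by simp [hxs]) (by simp [h3])) (by fun_prop)
  have intV : ∀ x y₁ y₂ : ℝ, x ∈ s → y₁ ∈ t → y₂ ∈ t →
      IntervalIntegrable (fun y : ℝ => G (x + y * I)) MeasureTheory.volume y₁ y₂ := by
    intro x y₁ y₂ h1 h2 h3
    apply ContinuousOn.intervalIntegrable
    intro y hy
    have hyt : y ∈ t := ht'.uIcc_subset h2 h3 hy
    exact ContinuousAt.continuousWithinAt <|
      show ContinuousAt (G ∘ fun y : ℝ => (x : ℂ) + y * I) y from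
        ContinuousAt.comp (hGc _ (by simp [h1]) (by simp [hyt])) (by fun_prop)
  set H : ℂ → ℂ := fun ζ =>
    (∫ x in x₀..ζ.re, G (x + y₀ * I)) + I * ∫ y in y₀..ζ.im, G (ζ.re + y * I) with hHdef
  refine ⟨H, ?_⟩
  -- the cocycle property, via Goursat
  have cocycle : ∀ ζ ζ' : ℂ, ζ.re ∈ s → ζ.im ∈ t → ζ'.re ∈ s → ζ'.im ∈ t →
      H ζ' - H ζ = (∫ x in ζ.re..ζ'.re, G (x + ζ.im * I)) +
        I * ∫ y in ζ.im..ζ'.im, G (ζ'.re + y * I) := by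
    intro ζ ζ' h1 h2 h1' h2'
    have goursat := Complex.integral_boundary_rect_eq_zero_of_differentiableOn G
      (ζ.re + ζ.im * I * 0 + y₀ * I) (ζ'.re + ζ.im * I) ?rect
    case rect =>
      intro w hw
      rw [Complex.mem_reProdIm] at hw
      simp only [Complex.add_re, Complex.add_im, Complex.ofReal_re, Complex.ofReal_im,
        Complex.mul_re, Complex.mul_im, Complex.I_re, Complex.I_im, mul_zero, mul_one,
        zero_mul, zero_add, add_zero, zero_sub, sub_zero, neg_zero] at hw
      exact (hG w (hs'.uIcc_subset h1 h1' hw.1)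
        (ht'.uIcc_subset hy₀ h2 hw.2)).differentiableWithinAt
    simp only [Complex.add_re, Complex.add_im, Complex.ofReal_re, Complex.ofReal_im,
      Complex.mul_re, Complex.mul_im, Complex.I_re, Complex.I_im, Complex.ofReal_im,
      mul_zero, mul_one, zero_mul, zero_add, add_zero, zero_sub, sub_zero, neg_zero,
      smul_eq_mul] at goursat
    -- goursat : (∫ x in ζ.re..ζ'.re, G (x + y₀*I)) - (∫ x in ζ.re..ζ'.re, G (x + ζ.im*I))
    --   + I * (∫ y in y₀..ζ.im, G (ζ'.re + y*I)) - I * (∫ y in y₀..ζ.im, G (ζ.re + y*I)) = 0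
    have addH : (∫ x in x₀..ζ'.re, G (x + y₀ * I)) - (∫ x in x₀..ζ.re, G (x + y₀ * I))
        = ∫ x in ζ.re..ζ'.re, G (x + y₀ * I) :=
      integral_interval_sub_left (intH _ _ _ hx₀ h1' hy₀) (intH _ _ _ hx₀ h1 hy₀)
    have addV : (∫ y in y₀..ζ.im, G (ζ'.re + y * I)) + (∫ y in ζ.im..ζ'.im, G (ζ'.re + y * I))
        = ∫ y in y₀..ζ'.im, G (ζ'.re + y * I) :=
      integral_add_adjacent_intervals (intV _ _ _ h1' hy₀ h2) (intV _ _ _ h1' h2 h2')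
    simp only [hHdef]
    linear_combination goursat + addH - (I : ℂ) * addV
  -- now the derivative
  intro ζ h1 h2
  have hRopen : IsOpen {w : ℂ | w.re ∈ s ∧ w.im ∈ t} := by
    exact (hs.preimage Complex.continuous_re).inter (ht.preimage Complex.continuous_im)
  rw [hasDerivAt_iff_isLittleO]
  rw [Asymptotics.isLittleO_iff]
  intro c hc
  have hcont := hGc ζ h1 h2
  have h3 : ∀ᶠ w in nhds ζ, ‖G w - G ζ‖ ≤ c / 2 := by
    have := hcont.eventually (Metric.closedBall_mem_nhds (G ζ) (by positivity : (0:ℝ) < c/2))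
    filter_upwards [this] with w hw
    simpa [dist_eq_norm] using hw
  obtain ⟨r', hr'pos, hball⟩ := Metric.eventually_nhds_iff_ball.mp
    (h3.and (hRopen.eventually_mem ⟨h1, h2⟩))
  rw [Metric.eventually_nhds_iff_ball]
  refine ⟨r' / 2, by positivity, ?_⟩
  intro ζ' hζ'
  have hd : dist ζ' ζ < r' / 2 := Metric.mem_ball.mp hζ'
  have hre : |ζ'.re - ζ.re| ≤ ‖ζ' - ζ‖ := by
    simpa [Complex.sub_re] using Complex.abs_re_le_norm (ζ' - ζ)
  have him : |ζ'.im - ζ.im| ≤ ‖ζ' - ζ‖ := by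
    simpa [Complex.sub_im] using Complex.abs_im_le_norm (ζ' - ζ)
  have hnorm : ‖ζ' - ζ‖ < r' / 2 := by rwa [dist_eq_norm] at hd
  -- membership of horizontal intermediate points
  have hmemH : ∀ u ∈ uIcc ζ.re ζ'.re, ((u : ℂ) + ζ.im * I) ∈ Metric.ball ζ r' := by
    intro u hu
    rw [Metric.mem_ball, dist_eq_norm]
    have : ((u:ℂ) + ζ.im * I) - ζ = ((u - ζ.re : ℝ) : ℂ) := by
      apply Complex.ext <;> simp
    rw [this]
    rw [Complex.norm_real]
    calc |u - ζ.re| ≤ |ζ'.re - ζ.re| := abs_sub_left_of_mem_uIcc hu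
      _ ≤ ‖ζ' - ζ‖ := hre
      _ < r' := by linarith
  have hmemV : ∀ v ∈ uIcc ζ.im ζ'.im, ((ζ'.re : ℂ) + v * I) ∈ Metric.ball ζ r' := by
    intro v hv
    rw [Metric.mem_ball, dist_eq_norm]
    have he : ((ζ'.re:ℂ) + v * I) - ζ = ((ζ'.re - ζ.re : ℝ) : ℂ) + ((v - ζ.im : ℝ) : ℂ) * I := by
      apply Complex.ext <;> simp
    calc ‖((ζ'.re:ℂ) + v * I) - ζ‖
        ≤ |((ζ'.re:ℂ) + v * I - ζ).re| + |((ζ'.re:ℂ) + v * I - ζ).im| :=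
          Complex.norm_le_abs_re_add_abs_im _
      _ = |ζ'.re - ζ.re| + |v - ζ.im| := by rw [he]; simp
      _ ≤ ‖ζ' - ζ‖ + |ζ'.im - ζ.im| :=
          add_le_add hre (abs_sub_left_of_mem_uIcc hv)
      _ ≤ ‖ζ' - ζ‖ + ‖ζ' - ζ‖ := by gcongr
      _ < r' := by linarith
  -- memberships in the strip
  have h1' : ζ'.re ∈ s := (hball ζ' (by simpa [dist_eq_norm] using hnorm.trans (by linarith))).2.1
  have h2' : ζ'.im ∈ t := (hball ζ' (by simpa [dist_eq_norm] using hnorm.trans (by linarith))).2.2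
  have hkey := cocycle ζ ζ' h1 h2 h1' h2'
  set A := ∫ x in ζ.re..ζ'.re, (G ((x:ℂ) + ζ.im * I) - G ζ) with hA
  set B := ∫ y in ζ.im..ζ'.im, (G ((ζ'.re:ℂ) + y * I) - G ζ) with hB
  have intH' : IntervalIntegrable (fun x : ℝ => G ((x:ℂ) + ζ.im * I)) MeasureTheory.volume
      ζ.re ζ'.re := intH _ _ _ h1 h1' h2
  have intV' : IntervalIntegrable (fun y : ℝ => G ((ζ'.re:ℂ) + y * I)) MeasureTheory.volume
      ζ.im ζ'.im := intV _ _ _ h1' h2 h2'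
  have hAe : A = (∫ x in ζ.re..ζ'.re, G ((x:ℂ) + ζ.im * I)) - ((ζ'.re - ζ.re : ℝ) : ℂ) * G ζ := by
    rw [hA, integral_sub intH' intervalIntegrable_const, integral_const]
    simp [Complex.real_smul]
  have hBe : B = (∫ y in ζ.im..ζ'.im, G ((ζ'.re:ℂ) + y * I)) - ((ζ'.im - ζ.im : ℝ) : ℂ) * G ζ := by
    rw [hB, integral_sub intV' intervalIntegrable_const, integral_const]
    simp [Complex.real_smul]
  have hdecomp : H ζ' - H ζ - (ζ' - ζ) • G ζ = A + I * B := by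
    rw [hAe, hBe, smul_eq_mul, hkey]
    have : ζ' - ζ = ((ζ'.re - ζ.re : ℝ) : ℂ) + ((ζ'.im - ζ.im : ℝ) : ℂ) * I := by
      apply Complex.ext <;> simp
    rw [this]; ring
  rw [hdecomp]
  have hnA : ‖A‖ ≤ (c/2) * |ζ'.re - ζ.re| := by
    rw [hA]
    apply intervalIntegral.norm_integral_le_of_norm_le_const
    intro x hx
    exact (hball _ (hmemH x (uIoc_subset_uIcc hx))).1
  have hnB : ‖B‖ ≤ (c/2) * |ζ'.im - ζ.im| := by
    rw [hB]
    apply intervalIntegral.norm_integral_le_of_norm_le_const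
    intro y hy
    exact (hball _ (hmemV y (uIoc_subset_uIcc hy))).1
  calc ‖A + I * B‖ ≤ ‖A‖ + ‖I * B‖ := norm_add_le _ _
    _ = ‖A‖ + ‖B‖ := by rw [norm_mul, Complex.norm_I, one_mul]
    _ ≤ (c/2) * |ζ'.re - ζ.re| + (c/2) * |ζ'.im - ζ.im| := add_le_add hnA hnB
    _ ≤ (c/2) * ‖ζ' - ζ‖ + (c/2) * ‖ζ' - ζ‖ := by
        have hc2 : (0:ℝ) ≤ c/2 := by positivity
        exact add_le_add (mul_le_mul_of_nonneg_left hre hc2)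
          (mul_le_mul_of_nonneg_left him hc2)
    _ = c * ‖ζ' - ζ‖ := by ring

end StripPrimitive

/-- variation of constants.  Let `b, c` be analytic on `D = D_{d,a,ε}` with
`b` nowhere vanishing; assume `c/b` tends to `0` at the origin and that for each `z ∈ D`
the improper integral `F(z) = lim_{δ→0⁺} ∫_δ^1 c(sz)/(b(sz) s) ds` exists.  Then
`u(z) = b(z) F(z)` is analytic on `D` and satisfies
`z u'(z) = (z b'(z)/b(z)) u(z) + c(z)` on `D`. -/
theorem variation_of_constants_analytic_solution
    (d a ε : ℝ) (ha : 0 < a) (hε : 0 < ε)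
    (hd₁ : -Real.pi < d - ε) (hd₂ : d + ε < Real.pi)
    (b c : ℂ → ℂ)
    (hb : AnalyticOnNhd ℂ b (domainD d a ε))
    (hc : AnalyticOnNhd ℂ c (domainD d a ε))
    (hb0 : ∀ z ∈ domainD d a ε, b z ≠ 0)
    (hsmall : ∀ η : ℝ, 0 < η → ∃ ρ : ℝ, 0 < ρ ∧
      ∀ w ∈ domainD d a ε, ‖w‖ < ρ → ‖c w / b w‖ ≤ η)
    (F : ℂ → ℂ)
    (hF : ∀ z ∈ domainD d a ε,
      Tendsto (fun δ : ℝ => ∫ s in δ..1, c ((s : ℂ) * z) / (b ((s : ℂ) * z) * (s : ℂ)))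
        (nhdsWithin 0 (Set.Ioi 0)) (nhds (F z))) :
    AnalyticOnNhd ℂ (fun z => b z * F z) (domainD d a ε) ∧
    ∀ z ∈ domainD d a ε,
      z * deriv (fun w => b w * F w) z = (z * deriv b z / b z) * (b z * F z) + c z := by
  set D := domainD d a ε with hD
  set sS : Set ℝ := Iio (Real.log a) with hsS
  set tS : Set ℝ := Ioo (d - ε) (d + ε) with htS
  set G : ℂ → ℂ := fun ζ =>
    c (Complex.exp ζ) / (b (Complex.exp ζ) * Complex.exp ζ) * Complex.exp ζ with hG
  -- membership facts
  have hDslit : ∀ z ∈ D, z ∈ Complex.slitPlane := by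
    intro z hz
    rw [Complex.mem_slitPlane_iff_arg]
    exact ⟨by have := hz.2.2.2; intro h; rw [h] at this; linarith, hz.1⟩
  have hlog_mem : ∀ z ∈ D, (Complex.log z).re ∈ sS ∧ (Complex.log z).im ∈ tS := by
    intro z hz
    refine ⟨?_, ?_⟩
    · rw [Complex.log_re, hsS]
      exact Real.log_lt_log (norm_pos_iff.mpr hz.1) hz.2.1
    · rw [Complex.log_im, htS]; exact hz.2.2
  have hexp_mem : ∀ ζ : ℂ, ζ.re ∈ sS → ζ.im ∈ tS → Complex.exp ζ ∈ D := by
    intro ζ h1 h2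
    have harg : Complex.arg (Complex.exp ζ) = ζ.im := by
      have : Complex.log (Complex.exp ζ) = ζ :=
        Complex.log_exp (by rw [htS] at h2; linarith [h2.1]) (by rw [htS] at h2; linarith [h2.2])
      rw [← Complex.log_im (Complex.exp ζ), this]
    refine ⟨Complex.exp_ne_zero ζ, ?_, ?_⟩
    · rw [Complex.norm_exp]
      calc Real.exp ζ.re < Real.exp (Real.log a) := Real.exp_lt_exp.mpr h1
        _ = a := Real.exp_log ha
    · rw [harg]; exact h2
  have hDopen : IsOpen D := by
    have himg : D = Complex.exp '' {ζ : ℂ | ζ.re ∈ sS ∧ ζ.im ∈ tS} := by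
      apply Subset.antisymm
      · intro z hz
        exact ⟨Complex.log z, ⟨(hlog_mem z hz).1, (hlog_mem z hz).2⟩,
          Complex.exp_log hz.1⟩
      · rintro z ⟨ζ, ⟨h1, h2⟩, rfl⟩
        exact hexp_mem ζ h1 h2
    rw [himg]
    exact Complex.isOpenMap_exp _ ((isOpen_Iio.preimage Complex.continuous_re).inter
      ((isOpen_Ioo).preimage Complex.continuous_im))
  -- G is differentiable on the strip
  have hGdiff : ∀ ζ : ℂ, ζ.re ∈ sS → ζ.im ∈ tS → DifferentiableAt ℂ G ζ := by
    intro ζ h1 h2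
    have hzD := hexp_mem ζ h1 h2
    have hde : DifferentiableAt ℂ Complex.exp ζ := Complex.differentiable_exp.differentiableAt
    have hbd : DifferentiableAt ℂ (fun w => b (Complex.exp w)) ζ :=
      ((hb _ hzD).differentiableAt.comp ζ hde)
    have hcd : DifferentiableAt ℂ (fun w => c (Complex.exp w)) ζ :=
      ((hc _ hzD).differentiableAt.comp ζ hde)
    exact ((hcd.div (hbd.mul hde) (mul_ne_zero (hb0 _ hzD) hzD.1)).mul hde)
  -- primitive on the strip
  obtain ⟨H, hH⟩ := strip_primitive sS tS isOpen_Iio isOpen_Ioo ordConnected_Iio ordConnected_Ioo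
    G hGdiff (Real.log (a/2)) d
    (by rw [hsS]; exact Real.log_lt_log (by linarith) (by linarith))
    (by rw [htS]; constructor <;> linarith)
  -- FTC along rays
  have hray : ∀ z ∈ D, ∀ δ : ℝ, δ ∈ Ioo (0:ℝ) 1 →
      (∫ s in δ..1, c ((s : ℂ) * z) / (b ((s : ℂ) * z) * (s : ℂ)))
        = H (Complex.log z) - H (Complex.log z + (Real.log δ : ℂ)) := by
    intro z hz δ hδ
    have hζs := (hlog_mem z hz).1
    have hζt := (hlog_mem z hz).2
    set ζ : ℂ := Complex.log z with hζdef
    have hupos : ∀ u ∈ uIcc δ (1:ℝ), 0 < u ∧ u ≤ 1 := by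
      intro u hu
      rw [uIcc_of_le hδ.2.le] at hu
      exact ⟨lt_of_lt_of_le hδ.1 hu.1, hu.2⟩
    have hmem : ∀ u : ℝ, 0 < u → u ≤ 1 →
        (ζ + (Real.log u : ℂ)).re ∈ sS ∧ (ζ + (Real.log u : ℂ)).im ∈ tS := by
      intro u hu0 hu1
      constructor
      · have hlu : Real.log u ≤ 0 := Real.log_nonpos hu0.le hu1
        have : ζ.re < Real.log a := hζs
        simp only [Complex.add_re, Complex.ofReal_re, hsS, mem_Iio]
        linarith
      · simpa using hζt
    have hexpu : ∀ u : ℝ, 0 < u → Complex.exp (ζ + (Real.log u : ℂ)) = (u : ℂ) * z := by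
      intro u hu0
      rw [Complex.exp_add, hζdef, Complex.exp_log hz.1, ← Complex.ofReal_exp,
        Real.exp_log hu0, mul_comm]
    have hderiv : ∀ u ∈ uIcc δ (1:ℝ), HasDerivAt (fun u : ℝ => H (ζ + (Real.log u : ℂ)))
        ((u⁻¹ : ℝ) • G (ζ + (Real.log u : ℂ))) u := by
      intro u hu
      obtain ⟨hu0, hu1⟩ := hupos u hu
      obtain ⟨hm1, hm2⟩ := hmem u hu0 hu1
      have houter : HasDerivAt (fun w : ℂ => H (ζ + w)) (G (ζ + (Real.log u : ℂ)))
          ((Real.log u : ℂ)) := by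
        have h := hH _ hm1 hm2
        have hin : HasDerivAt (fun w : ℂ => ζ + w) 1 ((Real.log u : ℂ)) :=
          (hasDerivAt_id _).const_add ζ
        simpa [Function.comp_def] using h.comp ((Real.log u : ℂ)) hin
      have hreal : HasDerivAt (fun y : ℝ => H (ζ + (y : ℂ))) (G (ζ + (Real.log u : ℂ)))
          (Real.log u) := houter.comp_ofReal
      have hlogu : HasDerivAt Real.log u⁻¹ u := Real.hasDerivAt_log (ne_of_gt hu0)
      exact HasDerivAt.scomp u hreal hlogu
    have hint : IntervalIntegrable (fun u : ℝ => (u⁻¹ : ℝ) • G (ζ + (Real.log u : ℂ)))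
        MeasureTheory.volume δ 1 := by
      apply ContinuousOn.intervalIntegrable
      intro u hu
      obtain ⟨hu0, hu1⟩ := hupos u hu
      obtain ⟨hm1, hm2⟩ := hmem u hu0 hu1
      apply ContinuousWithinAt.fun_smul
      · exact ((continuousAt_inv₀ (ne_of_gt hu0)).continuousWithinAt)
      · apply ContinuousAt.continuousWithinAt
        show ContinuousAt ((G ∘ fun w : ℂ => ζ + w) ∘ (fun u : ℝ => ((Real.log u : ℝ) : ℂ))) u
        apply ContinuousAt.comp
        · exact ContinuousAt.comp ((hGdiff _ hm1 hm2).continuousAt) (by fun_prop)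
        · exact Complex.continuous_ofReal.continuousAt.comp
            (Real.continuousAt_log (ne_of_gt hu0))
    have hftc := intervalIntegral.integral_eq_sub_of_hasDerivAt hderiv hint
    have hcongr : EqOn (fun u : ℝ => c ((u : ℂ) * z) / (b ((u : ℂ) * z) * (u : ℂ)))
        (fun u : ℝ => (u⁻¹ : ℝ) • G (ζ + (Real.log u : ℂ))) (uIcc δ 1) := by
      intro u hu
      obtain ⟨hu0, hu1⟩ := hupos u hu
      have huD : ((u : ℂ) * z) ∈ D := by
        refine ⟨mul_ne_zero (by exact_mod_cast ne_of_gt hu0) hz.1, ?_, ?_⟩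
        · rw [norm_mul, Complex.norm_real, Real.norm_eq_abs, abs_of_pos hu0]
          calc u * ‖z‖ ≤ 1 * ‖z‖ := by
                exact mul_le_mul_of_nonneg_right hu1 (norm_nonneg z)
            _ = ‖z‖ := one_mul _
            _ < a := hz.2.1
        · rw [show ((u:ℂ) * z) = ((u:ℝ):ℂ) * z from rfl, Complex.arg_real_mul z hu0]
          exact hz.2.2
      simp only [hG, hexpu u hu0]
      rw [Complex.real_smul]
      have hbne : b ((u:ℂ) * z) ≠ 0 := hb0 _ huD
      have hune : (u : ℂ) ≠ 0 := by exact_mod_cast ne_of_gt hu0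
      rw [Complex.ofReal_inv]
      field_simp [hbne, hune, hz.1]
    rw [intervalIntegral.integral_congr hcongr, hftc, Real.log_one]
    simp
  -- limits along rays
  have hlim : ∀ z ∈ D, Tendsto (fun τ : ℝ => H (Complex.log z + (τ : ℂ))) atBot
      (nhds (H (Complex.log z) - F z)) := by
    intro z hz
    have h1 : ∀ᶠ δ in nhdsWithin (0:ℝ) (Ioi 0),
        (∫ s in δ..1, c ((s : ℂ) * z) / (b ((s : ℂ) * z) * (s : ℂ)))
          = H (Complex.log z) - H (Complex.log z + (Real.log δ : ℂ)) := by
      filter_upwards [Ioo_mem_nhdsGT_of_mem (left_mem_Ico.mpr one_pos)] with δ hδ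
      exact hray z hz δ hδ
    have h2 : Tendsto (fun δ : ℝ => H (Complex.log z) - H (Complex.log z + (Real.log δ : ℂ)))
        (nhdsWithin (0:ℝ) (Ioi 0)) (nhds (F z)) := (hF z hz).congr' h1
    have h3 : Tendsto (fun δ : ℝ => H (Complex.log z + (Real.log δ : ℂ)))
        (nhdsWithin (0:ℝ) (Ioi 0)) (nhds (H (Complex.log z) - F z)) := by
      have := (tendsto_const_nhds (x := H (Complex.log z))
        (f := nhdsWithin (0:ℝ) (Ioi 0))).sub h2
      simpa [sub_sub_cancel] using this
    have hexp : Tendsto (fun τ : ℝ => Real.exp τ) atBot (nhdsWithin (0:ℝ) (Ioi 0)) := by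
      rw [tendsto_nhdsWithin_iff]
      exact ⟨Real.tendsto_exp_atBot, Eventually.of_forall (fun τ => Real.exp_pos τ)⟩
    have := h3.comp hexp
    simp only [Function.comp_def, Real.log_exp] at this
    exact this
  -- smallness of G far left
  have hsmallG : ∀ η : ℝ, 0 < η → ∃ M : ℝ, ∀ ζ : ℂ, ζ.re ∈ sS → ζ.im ∈ tS → ζ.re < M →
      ‖G ζ‖ ≤ η := by
    intro η hη
    obtain ⟨ρ, hρ, hbound⟩ := hsmall η hη
    refine ⟨Real.log ρ, fun ζ h1 h2 hre => ?_⟩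
    have hzD := hexp_mem ζ h1 h2
    have habs : ‖Complex.exp ζ‖ < ρ := by
      rw [Complex.norm_exp]
      calc Real.exp ζ.re < Real.exp (Real.log ρ) := Real.exp_lt_exp.mpr hre
        _ = ρ := Real.exp_log hρ
    have hval : G ζ = c (Complex.exp ζ) / b (Complex.exp ζ) := by
      rw [hG]
      show c (Complex.exp ζ) / (b (Complex.exp ζ) * Complex.exp ζ) * Complex.exp ζ = _
      rw [div_mul_eq_mul_div]
      exact mul_div_mul_right _ _ (Complex.exp_ne_zero ζ)
    rw [hval]
    exact hbound _ hzD habs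
  -- the limit value is the same for all z
  have hconst : ∀ z ∈ D, ∀ z' ∈ D,
      H (Complex.log z) - F z = H (Complex.log z') - F z' := by
    have hGc : ∀ ζ : ℂ, ζ.re ∈ sS → ζ.im ∈ tS → ContinuousAt G ζ :=
      fun ζ h1 h2 => (hGdiff ζ h1 h2).continuousAt
    have hsOC : sS.OrdConnected := by rw [hsS]; exact ordConnected_Iio
    have htOC : tS.OrdConnected := by rw [htS]; exact ordConnected_Ioo
    have intHm : ∀ x₁ x₂ y : ℝ, x₁ ∈ sS → x₂ ∈ sS → y ∈ tS →
        IntervalIntegrable (fun x : ℝ => G ((x:ℂ) + (y:ℂ) * Complex.I))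
          MeasureTheory.volume x₁ x₂ := by
      intro x₁ x₂ y h1 h2 h3
      apply ContinuousOn.intervalIntegrable
      intro x hx
      have hxs : x ∈ sS := hsOC.uIcc_subset h1 h2 hx
      exact ContinuousAt.continuousWithinAt <|
        show ContinuousAt (G ∘ fun x : ℝ => (x : ℂ) + (y:ℂ) * Complex.I) x from
          ContinuousAt.comp (hGc _ (by simp [hxs]) (by simp [h3])) (by fun_prop)
    have intVm : ∀ x y₁ y₂ : ℝ, x ∈ sS → y₁ ∈ tS → y₂ ∈ tS →
        IntervalIntegrable (fun y : ℝ => G ((x:ℂ) + (y:ℂ) * Complex.I))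
          MeasureTheory.volume y₁ y₂ := by
      intro x y₁ y₂ h1 h2 h3
      apply ContinuousOn.intervalIntegrable
      intro y hy
      have hyt : y ∈ tS := htOC.uIcc_subset h2 h3 hy
      exact ContinuousAt.continuousWithinAt <|
        show ContinuousAt (G ∘ fun y : ℝ => (x : ℂ) + (y:ℂ) * Complex.I) y from
          ContinuousAt.comp (hGc _ (by simp [h1]) (by simp [hyt])) (by fun_prop)
    have horiz : ∀ x₁ x₂ y : ℝ, x₁ ∈ sS → x₂ ∈ sS → y ∈ tS →
        H ((x₂:ℂ) + (y:ℂ) * Complex.I) - H ((x₁:ℂ) + (y:ℂ) * Complex.I)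
          = ∫ x in x₁..x₂, G ((x:ℂ) + (y:ℂ) * Complex.I) := by
      intro x₁ x₂ y h1 h2 h3
      have hderiv : ∀ x ∈ uIcc x₁ x₂, HasDerivAt (fun x : ℝ => H ((x:ℂ) + (y:ℂ) * Complex.I))
          (G ((x:ℂ) + (y:ℂ) * Complex.I)) x := by
        intro x hx
        have hxs : x ∈ sS := hsOC.uIcc_subset h1 h2 hx
        have houter : HasDerivAt (fun w : ℂ => H (w + (y:ℂ) * Complex.I))
            (G ((x:ℂ) + (y:ℂ) * Complex.I)) ((x:ℂ)) := by
          have h := hH ((x:ℂ) + (y:ℂ) * Complex.I) (by simp [hxs]) (by simp [h3])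
          have hin : HasDerivAt (fun w : ℂ => w + (y:ℂ) * Complex.I) 1 ((x:ℂ)) :=
            (hasDerivAt_id _).add_const _
          simpa [Function.comp_def] using h.comp ((x:ℂ)) hin
        exact houter.comp_ofReal
      exact (intervalIntegral.integral_eq_sub_of_hasDerivAt hderiv (intHm x₁ x₂ y h1 h2 h3)).symm
    have vert : ∀ x y₁ y₂ : ℝ, x ∈ sS → y₁ ∈ tS → y₂ ∈ tS →
        H ((x:ℂ) + (y₂:ℂ) * Complex.I) - H ((x:ℂ) + (y₁:ℂ) * Complex.I)
          = (∫ y in y₁..y₂, G ((x:ℂ) + (y:ℂ) * Complex.I)) * Complex.I := by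
      intro x y₁ y₂ h1 h2 h3
      have hderiv : ∀ y ∈ uIcc y₁ y₂, HasDerivAt (fun y : ℝ => H ((x:ℂ) + (y:ℂ) * Complex.I))
          (G ((x:ℂ) + (y:ℂ) * Complex.I) * Complex.I) y := by
        intro y hy
        have hyt : y ∈ tS := htOC.uIcc_subset h2 h3 hy
        have houter : HasDerivAt (fun w : ℂ => H ((x:ℂ) + w * Complex.I))
            (G ((x:ℂ) + (y:ℂ) * Complex.I) * Complex.I) ((y:ℂ)) := by
          have h := hH ((x:ℂ) + (y:ℂ) * Complex.I) (by simp [h1]) (by simp [hyt])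
          have hin : HasDerivAt (fun w : ℂ => (x:ℂ) + w * Complex.I) Complex.I ((y:ℂ)) := by
            simpa using ((hasDerivAt_id ((y:ℂ))).mul_const Complex.I).const_add ((x:ℂ))
          simpa [Function.comp_def] using h.comp ((y:ℂ)) hin
        exact houter.comp_ofReal
      have hint2 : IntervalIntegrable
          (fun y : ℝ => G ((x:ℂ) + (y:ℂ) * Complex.I) * Complex.I)
          MeasureTheory.volume y₁ y₂ := (intVm x y₁ y₂ h1 h2 h3).mul_const Complex.I
      calc H ((x:ℂ) + (y₂:ℂ) * Complex.I) - H ((x:ℂ) + (y₁:ℂ) * Complex.I)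
          = ∫ y in y₁..y₂, G ((x:ℂ) + (y:ℂ) * Complex.I) * Complex.I :=
            (intervalIntegral.integral_eq_sub_of_hasDerivAt hderiv hint2).symm
        _ = (∫ y in y₁..y₂, G ((x:ℂ) + (y:ℂ) * Complex.I)) * Complex.I :=
            intervalIntegral.integral_mul_const _ _
    intro z hz z' hz'
    have hzs := (hlog_mem z hz).1
    have hzt := (hlog_mem z hz).2
    have hzs' := (hlog_mem z' hz').1
    have hzt' := (hlog_mem z' hz').2
    have hdiff0 : Tendsto
        (fun τ : ℝ => H (Complex.log z + (τ:ℂ)) - H (Complex.log z' + (τ:ℂ)))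
        atBot (nhds 0) := by
      rw [NormedAddCommGroup.tendsto_nhds_zero]
      intro η hη
      set yy : ℝ := (Complex.log z).im with hyy
      set yy' : ℝ := (Complex.log z').im with hyy'
      set K : ℝ := |yy - yy'| + |(Complex.log z).re - (Complex.log z').re| with hK
      have hK0 : 0 ≤ K := by positivity
      set η' : ℝ := η / (2 * (1 + K)) with hη'def
      have hη' : 0 < η' := by rw [hη'def]; positivity
      obtain ⟨M, hM⟩ := hsmallG η' hη'
      set T₀ : ℝ := min (min (M - (Complex.log z).re) (M - (Complex.log z').re)) 0 - 1 with hT₀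
      filter_upwards [eventually_le_atBot T₀] with τ hτ
      have hτ0 : τ < 0 := by
        have := min_le_right (min (M - (Complex.log z).re) (M - (Complex.log z').re)) (0:ℝ)
        rw [hT₀] at hτ; linarith
      set x : ℝ := (Complex.log z).re + τ with hx
      set x' : ℝ := (Complex.log z').re + τ with hx'
      have hxM : x < M := by
        have h1 := (min_le_left (M - (Complex.log z).re) (M - (Complex.log z').re)).trans_eq' rfl
        have := min_le_left (min (M - (Complex.log z).re) (M - (Complex.log z').re)) (0:ℝ)
        rw [hT₀] at hτ
        have h2 : min (M - (Complex.log z).re) (M - (Complex.log z').re)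
            ≤ M - (Complex.log z).re := min_le_left _ _
        rw [hx]; linarith
      have hxM' : x' < M := by
        rw [hT₀] at hτ
        have := min_le_left (min (M - (Complex.log z).re) (M - (Complex.log z').re)) (0:ℝ)
        have h2 : min (M - (Complex.log z).re) (M - (Complex.log z').re)
            ≤ M - (Complex.log z').re := min_le_right _ _
        rw [hx']; linarith
      have hxs : x ∈ sS := by
        rw [hsS, mem_Iio, hx]
        have : (Complex.log z).re < Real.log a := hzs
        linarith
      have hxs' : x' ∈ sS := by
        rw [hsS, mem_Iio, hx']
        have : (Complex.log z').re < Real.log a := hzs'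
        linarith
      have hrw1 : Complex.log z + (τ:ℂ) = (x:ℂ) + (yy:ℂ) * Complex.I := by
        apply Complex.ext <;> simp [hx, hyy]
      have hrw2 : Complex.log z' + (τ:ℂ) = (x':ℂ) + (yy':ℂ) * Complex.I := by
        apply Complex.ext <;> simp [hx', hyy']
      rw [hrw1, hrw2]
      have e1 : H ((x:ℂ) + (yy:ℂ) * Complex.I) - H ((x':ℂ) + (yy':ℂ) * Complex.I)
          = ((∫ v in yy'..yy, G ((x:ℂ) + (v:ℂ) * Complex.I)) * Complex.I)
            + ∫ u in x'..x, G ((u:ℂ) + (yy':ℂ) * Complex.I) := by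
        have v1 := vert x yy' yy hxs hzt' hzt
        have h1 := horiz x' x yy' hxs' hxs hzt'
        linear_combination v1 + h1
      rw [e1]
      have b1 : ‖(∫ v in yy'..yy, G ((x:ℂ) + (v:ℂ) * Complex.I)) * Complex.I‖
          ≤ η' * |yy - yy'| := by
        rw [norm_mul, Complex.norm_I, mul_one]
        apply intervalIntegral.norm_integral_le_of_norm_le_const
        intro v hv
        have hvt : v ∈ tS := htOC.uIcc_subset hzt' hzt (uIoc_subset_uIcc hv)
        exact hM _ (by simp [hxs]) (by simp [hvt]) (by simp [hxM])
      have b2 : ‖∫ u in x'..x, G ((u:ℂ) + (yy':ℂ) * Complex.I)‖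
          ≤ η' * |x - x'| := by
        apply intervalIntegral.norm_integral_le_of_norm_le_const
        intro u hu
        have hus : u ∈ sS := hsOC.uIcc_subset hxs' hxs (uIoc_subset_uIcc hu)
        have huM : u < M := by
          have h2 : u ≤ max x' x := (mem_Icc.mp (uIoc_subset_uIcc hu)).2
          have h3 : max x' x < M := max_lt hxM' hxM
          linarith
        exact hM _ (by simp [hus]) (by simp [hzt']) (by simp [huM])
      have hxx : |x - x'| = |(Complex.log z).re - (Complex.log z').re| := by
        rw [hx, hx']; ring_nf
      calc ‖((∫ v in yy'..yy, G ((x:ℂ) + (v:ℂ) * Complex.I)) * Complex.I)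
            + ∫ u in x'..x, G ((u:ℂ) + (yy':ℂ) * Complex.I)‖
          ≤ ‖(∫ v in yy'..yy, G ((x:ℂ) + (v:ℂ) * Complex.I)) * Complex.I‖
            + ‖∫ u in x'..x, G ((u:ℂ) + (yy':ℂ) * Complex.I)‖ := norm_add_le _ _
        _ ≤ η' * |yy - yy'| + η' * |x - x'| := add_le_add b1 b2
        _ = η' * K := by rw [hxx, hK]; ring
        _ ≤ η / 2 := by
            rw [hη'def]
            rw [div_mul_eq_mul_div, div_le_div_iff₀ (by positivity) (by norm_num)]
            nlinarith
        _ < η := by linarith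
    have := tendsto_nhds_unique ((hlim z hz).sub (hlim z' hz')) hdiff0
    exact sub_eq_zero.mp this
  -- fixed base point
  set ζ₁ : ℂ := (Real.log (a/2) : ℂ) + (d : ℂ) * Complex.I with hζ₁
  have hζ₁re : ζ₁.re ∈ sS := by
    simp [hζ₁, hsS]
    exact Real.log_lt_log (by linarith) (by linarith)
  have hζ₁im : ζ₁.im ∈ tS := by
    simp only [hζ₁, htS, Complex.add_im, Complex.ofReal_im, Complex.mul_im, Complex.I_im,
      Complex.ofReal_re, Complex.I_re, mul_zero, mul_one, zero_add, zero_mul, add_zero]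
    exact ⟨by linarith, by linarith⟩
  set z₁ : ℂ := Complex.exp ζ₁ with hz₁
  have hz₁D : z₁ ∈ D := hexp_mem ζ₁ hζ₁re hζ₁im
  set Λ : ℂ := H (Complex.log z₁) - F z₁ with hΛ
  have hFeq : ∀ z ∈ D, F z = H (Complex.log z) - Λ := by
    intro z hz
    have := hconst z hz z₁ hz₁D
    rw [hΛ]; linear_combination -this
  -- analyticity of F
  have hFan : ∀ z ∈ D, AnalyticAt ℂ F z := by
    intro z hz
    have hHan : AnalyticAt ℂ H (Complex.log z) := by
      apply DifferentiableOn.analyticAt (s := {ζ : ℂ | ζ.re ∈ sS ∧ ζ.im ∈ tS})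
      · exact fun w hw => ((hH w hw.1 hw.2).differentiableAt).differentiableWithinAt
      · exact ((isOpen_Iio.preimage Complex.continuous_re).inter
          ((isOpen_Ioo).preimage Complex.continuous_im)).mem_nhds
          ⟨(hlog_mem z hz).1, (hlog_mem z hz).2⟩
    have : AnalyticAt ℂ (fun w => H (Complex.log w) - Λ) z :=
      (hHan.comp (analyticAt_clog (hDslit z hz))).sub analyticAt_const
    apply this.congr
    filter_upwards [hDopen.eventually_mem hz] with w hw
    exact (hFeq w hw).symm
  -- derivative of F
  have hFd : ∀ z ∈ D, HasDerivAt F (c z / (b z * z)) z := by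
    intro z hz
    have h1 : HasDerivAt (fun w => H (Complex.log w) - Λ)
        (G (Complex.log z) * z⁻¹) z := by
      have hlog := Complex.hasDerivAt_log (hDslit z hz)
      have hcomp := (hH (Complex.log z) (hlog_mem z hz).1 (hlog_mem z hz).2).comp z hlog
      exact hcomp.sub_const Λ
    have h2 : G (Complex.log z) * z⁻¹ = c z / (b z * z) := by
      rw [hG]
      simp only [Complex.exp_log hz.1]
      exact mul_inv_cancel_right₀ hz.1 _
    rw [h2] at h1
    apply h1.congr_of_eventuallyEq
    filter_upwards [hDopen.eventually_mem hz] with w hw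
    exact hFeq w hw
  constructor
  · exact fun z hz => (hb z hz).mul (hFan z hz)
  · intro z hz
    have hu : HasDerivAt (fun w => b w * F w)
        (deriv b z * F z + b z * (c z / (b z * z))) z :=
      ((hb z hz).differentiableAt.hasDerivAt).mul (hFd z hz)
    rw [hu.deriv]
    have hbz := hb0 z hz
    have hz0 := hz.1
    field_simp
end
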